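/- arXiv:2007.15478 — 8 statements merged into one kernel-verified Lean document; each statement's English description precedes it below -/
import Mathlib

section
/- Let E be a quadratic word equation over a finite alphabet A of constants and a finite set V of variables. Then E has a solution if and only if the trivial equation ε = ε is reachable from E under the Nielsen transformation, i.e., E ⇒* (ε = ε). -/
namespace WordEq

variable {A V : Type*}

/-- A word over the alphabet of constants `A` and variables `V`. -/
abbrev Word (A V : Type*) := List (A ⊕ V)

/-- A word equation `L = R`, given as the pair `(L, R)`. -/
abbrev Equation (A V : Type*) := Word A V × Word A V

/-- Substitute the word `r` for every occurrence of the variable `x` in `w`. -/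
def substVar [DecidableEq V] (x : V) (r : Word A V) (w : Word A V) : Word A V :=
  w.flatMap fun s =>
    match s with
    | Sum.inl a => [Sum.inl a]
    | Sum.inr y => if y = x then r else [Sum.inr y]

/-- The number of occurrences of the variable `x` in the equation `E`
(counting both sides). -/
def varCount [DecidableEq A] [DecidableEq V] (E : Equation A V) (x : V) : ℕ :=
  (E.1 ++ E.2).count (Sum.inr x)

/-- An equation is quadratic if every variable occurs at most twice. -/
def Quadratic [DecidableEq A] [DecidableEq V] (E : Equation A V) : Prop :=
  ∀ x : V, varCount E x ≤ 2

/-- Apply a substitution (a map from variables to constant words) to a word,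
i.e. the unique monoid homomorphism `(A ∪ V)* → A*` extending `σ` and fixing
every constant. -/
def applySub (σ : V → List A) (w : Word A V) : List A :=
  w.flatMap fun s =>
    match s with
    | Sum.inl a => [a]
    | Sum.inr x => σ x

/-- `σ` is a solution of the word equation `E`. -/
def IsSolution (σ : V → List A) (E : Equation A V) : Prop :=
  applySub σ E.1 = applySub σ E.2

/-- The length `|E| = |L| + |R|` of a word equation. -/
def eqLen (E : Equation A V) : ℕ := E.1.length + E.2.length

/-- The Nielsen transformation (Levi's method) rewriting relation on word
equations.  The rules `p1`–`p4` remove a nonempty prefix from an equation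
`α·w₁ = β·w₂`; the rules `eraseL`/`eraseR` erase a variable that is guessed to
denote the empty word (substituting `ε` for it everywhere). -/
inductive Nielsen [DecidableEq V] : Equation A V → Equation A V → Prop
  | eraseL (x : V) (w₁ w₂ : Word A V) :
      Nielsen (Sum.inr x :: w₁, w₂) (substVar x [] w₁, substVar x [] w₂)
  | eraseR (w₁ : Word A V) (x : V) (w₂ : Word A V) :
      Nielsen (w₁, Sum.inr x :: w₂) (substVar x [] w₁, substVar x [] w₂)
  | p1 (α : A ⊕ V) (w₁ w₂ : Word A V) :
      Nielsen (α :: w₁, α :: w₂) (w₁, w₂)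
  | p2 (a : A) (y : V) (w₁ w₂ : Word A V) :
      Nielsen (Sum.inl a :: w₁, Sum.inr y :: w₂)
        (substVar y [Sum.inl a, Sum.inr y] w₁,
          Sum.inr y :: substVar y [Sum.inl a, Sum.inr y] w₂)
  | p3 (x : V) (a : A) (w₁ w₂ : Word A V) :
      Nielsen (Sum.inr x :: w₁, Sum.inl a :: w₂)
        (Sum.inr x :: substVar x [Sum.inl a, Sum.inr x] w₁,
          substVar x [Sum.inl a, Sum.inr x] w₂)
  | p4L (x y : V) (hxy : x ≠ y) (w₁ w₂ : Word A V) :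
      Nielsen (Sum.inr x :: w₁, Sum.inr y :: w₂)
        (substVar y [Sum.inr x, Sum.inr y] w₁,
          Sum.inr y :: substVar y [Sum.inr x, Sum.inr y] w₂)
  | p4R (x y : V) (hxy : x ≠ y) (w₁ w₂ : Word A V) :
      Nielsen (Sum.inr x :: w₁, Sum.inr y :: w₂)
        (Sum.inr x :: substVar x [Sum.inr y, Sum.inr x] w₁,
          substVar x [Sum.inr y, Sum.inr x] w₂)

/-! ### Auxiliary lemmas -/

@[simp] lemma applySub_nil (σ : V → List A) : applySub σ ([] : Word A V) = [] := rfl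

@[simp] lemma applySub_cons_inl (σ : V → List A) (a : A) (w : Word A V) :
    applySub σ (Sum.inl a :: w) = a :: applySub σ w := by
  simp [applySub]

@[simp] lemma applySub_cons_inr (σ : V → List A) (x : V) (w : Word A V) :
    applySub σ (Sum.inr x :: w) = σ x ++ applySub σ w := by
  simp [applySub]

@[simp] lemma substVar_nil [DecidableEq V] (x : V) (u : Word A V) :
    substVar x u ([] : Word A V) = [] := rfl

@[simp] lemma substVar_cons_inl [DecidableEq V] (x : V) (u : Word A V) (a : A) (w : Word A V) :
    substVar x u (Sum.inl a :: w) = Sum.inl a :: substVar x u w := by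
  simp [substVar]

@[simp] lemma substVar_cons_inr [DecidableEq V] (x : V) (u : Word A V) (y : V) (w : Word A V) :
    substVar x u (Sum.inr y :: w) =
      (if y = x then u else [Sum.inr y]) ++ substVar x u w := by
  simp [substVar]

lemma applySub_append (σ : V → List A) (u v : Word A V) :
    applySub σ (u ++ v) = applySub σ u ++ applySub σ v := by
  simp [applySub]

lemma applySub_substVar [DecidableEq V] (σ : V → List A) (x : V) (u w : Word A V) :
    applySub σ (substVar x u w) = applySub (Function.update σ x (applySub σ u)) w := by
  induction w with
  | nil => rfl
  | cons s w ih =>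
    cases s with
    | inl a => simp only [substVar_cons_inl, applySub_cons_inl, ih]
    | inr y =>
      by_cases h : y = x
      · subst h
        rw [substVar_cons_inr, if_pos rfl, applySub_append, ih, applySub_cons_inr,
          Function.update_self]
      · rw [substVar_cons_inr, if_neg h, applySub_append, ih, applySub_cons_inr,
          applySub_cons_inr, applySub_nil, List.append_nil, Function.update_of_ne h]

/-- Key identity for the forward direction. -/
lemma applySub_update_substVar [DecidableEq V] (σ : V → List A) (y : V) (t : List A)
    (u w : Word A V) (h : applySub (Function.update σ y t) u = σ y) :
    applySub (Function.update σ y t) (substVar y u w) = applySub σ w := by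
  rw [applySub_substVar, h, Function.update_idem, Function.update_eq_self]

lemma length_substVar_nil_le [DecidableEq V] (x : V) (w : Word A V) :
    (substVar x [] w).length ≤ w.length := by
  induction w with
  | nil => simp
  | cons s w ih =>
    cases s with
    | inl a => simpa using Nat.succ_le_succ ih
    | inr y =>
      by_cases h : y = x
      · simp [h]; omega
      · simp [h]; omega

lemma applySub_substVar_nil [DecidableEq V] (σ : V → List A) (x : V) (hx : σ x = [])
    (w : Word A V) :
    applySub σ (substVar x [] w) = applySub σ w := by
  rw [applySub_substVar, applySub_nil, ← hx, Function.update_eq_self]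

/-- Backward transport of solutions along a single Nielsen step. -/
lemma sol_of_step [DecidableEq V] {E E' : Equation A V} (h : Nielsen E E')
    (hsol : ∃ σ : V → List A, IsSolution σ E') : ∃ σ : V → List A, IsSolution σ E := by
  obtain ⟨σ', hσ'⟩ := hsol
  cases h with
  | eraseL x w₁ w₂ =>
    refine ⟨Function.update σ' x [], ?_⟩
    have e : ∀ w : Word A V, applySub σ' (substVar x [] w) =
        applySub (Function.update σ' x []) w := fun w => applySub_substVar σ' x [] w
    unfold IsSolution at hσ' ⊢
    rw [e, e] at hσ'
    simpa [Function.update_self] using hσ'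
  | eraseR w₁ x w₂ =>
    refine ⟨Function.update σ' x [], ?_⟩
    have e : ∀ w : Word A V, applySub σ' (substVar x [] w) =
        applySub (Function.update σ' x []) w := fun w => applySub_substVar σ' x [] w
    unfold IsSolution at hσ' ⊢
    rw [e, e] at hσ'
    simpa [Function.update_self] using hσ'
  | p1 α w₁ w₂ =>
    refine ⟨σ', ?_⟩
    unfold IsSolution at hσ' ⊢
    cases α with
    | inl a => simp [hσ']
    | inr x => simp [hσ']
  | p2 a y w₁ w₂ =>
    refine ⟨Function.update σ' y (a :: σ' y), ?_⟩
    have e : ∀ w : Word A V, applySub σ' (substVar y [Sum.inl a, Sum.inr y] w) =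
        applySub (Function.update σ' y (a :: σ' y)) w := fun w => by
      have := applySub_substVar σ' y [Sum.inl a, Sum.inr y] w
      simpa using this
    unfold IsSolution at hσ' ⊢
    simp only at hσ'
    rw [applySub_cons_inr] at hσ'
    rw [e, e] at hσ'
    simp [Function.update_self, hσ']
  | p3 x a w₁ w₂ =>
    refine ⟨Function.update σ' x (a :: σ' x), ?_⟩
    have e : ∀ w : Word A V, applySub σ' (substVar x [Sum.inl a, Sum.inr x] w) =
        applySub (Function.update σ' x (a :: σ' x)) w := fun w => by
      have := applySub_substVar σ' x [Sum.inl a, Sum.inr x] w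
      simpa using this
    unfold IsSolution at hσ' ⊢
    simp only at hσ'
    rw [applySub_cons_inr] at hσ'
    rw [e, e] at hσ'
    simp [Function.update_self, hσ'.symm]
  | p4L x y hxy w₁ w₂ =>
    refine ⟨Function.update σ' y (σ' x ++ σ' y), ?_⟩
    have e : ∀ w : Word A V, applySub σ' (substVar y [Sum.inr x, Sum.inr y] w) =
        applySub (Function.update σ' y (σ' x ++ σ' y)) w := fun w => by
      have := applySub_substVar σ' y [Sum.inr x, Sum.inr y] w
      simpa using this
    unfold IsSolution at hσ' ⊢
    simp only at hσ'
    rw [applySub_cons_inr] at hσ'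
    rw [e, e] at hσ'
    simp [Function.update_self, Function.update_of_ne hxy, hσ']
  | p4R x y hxy w₁ w₂ =>
    refine ⟨Function.update σ' x (σ' y ++ σ' x), ?_⟩
    have e : ∀ w : Word A V, applySub σ' (substVar x [Sum.inr y, Sum.inr x] w) =
        applySub (Function.update σ' x (σ' y ++ σ' x)) w := fun w => by
      have := applySub_substVar σ' x [Sum.inr y, Sum.inr x] w
      simpa using this
    unfold IsSolution at hσ' ⊢
    simp only at hσ'
    rw [applySub_cons_inr] at hσ'
    rw [e, e] at hσ'
    simp [Function.update_self, Function.update_of_ne (Ne.symm hxy), hσ'.symm]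

/-- Forward direction: from a solution, reach the trivial equation. -/
lemma reaches_trivial [DecidableEq A] [DecidableEq V] :
    ∀ (n m : ℕ) (σ : V → List A) (E : Equation A V),
      (applySub σ E.1).length + (applySub σ E.2).length ≤ n →
      eqLen E ≤ m → IsSolution σ E →
      Relation.ReflTransGen Nielsen E (([], []) : Equation A V) := by
  intro n
  induction n using Nat.strong_induction_on with
  | _ n ihn =>
  intro m
  induction m using Nat.strong_induction_on with
  | _ m ihm =>
  intro σ E h1 h2 hsol
  obtain ⟨L, R⟩ := E
  cases L with
  | nil =>
    cases R with
    | nil => exact Relation.ReflTransGen.refl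
    | cons β w₂ =>
      cases β with
      | inl a => exact absurd hsol (by simp [IsSolution])
      | inr x =>
        have hs : ([] : List A) = σ x ++ applySub σ w₂ := by simpa [IsSolution] using hsol
        have hx : σ x = [] := by
          rcases List.append_eq_nil_iff.mp hs.symm with ⟨h', -⟩; exact h'
        have hw : applySub σ w₂ = [] := by
          rcases List.append_eq_nil_iff.mp hs.symm with ⟨-, h'⟩; exact h'
        have e := applySub_substVar_nil σ x hx
        refine Relation.ReflTransGen.head (Nielsen.eraseR [] x w₂) ?_
        refine ihm (eqLen ((substVar x [] ([] : Word A V), substVar x [] w₂) : Equation A V))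
          ?_ σ _ ?_ le_rfl ?_
        · have hl := length_substVar_nil_le x w₂
          simp [eqLen] at h2 ⊢; omega
        · simp only [e]; simp [hx] at h1 ⊢; omega
        · unfold IsSolution
          simp only [e]
          simpa [hx, hw] using hsol
  | cons α w₁ =>
    cases R with
    | nil =>
      cases α with
      | inl a => exact absurd hsol (by simp [IsSolution])
      | inr x =>
        have hs : σ x ++ applySub σ w₁ = ([] : List A) := by simpa [IsSolution] using hsol
        have hx : σ x = [] := (List.append_eq_nil_iff.mp hs).1
        have hw : applySub σ w₁ = [] := (List.append_eq_nil_iff.mp hs).2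
        have e := applySub_substVar_nil σ x hx
        refine Relation.ReflTransGen.head (Nielsen.eraseL x w₁ []) ?_
        refine ihm (eqLen ((substVar x [] w₁, substVar x [] ([] : Word A V)) : Equation A V))
          ?_ σ _ ?_ le_rfl ?_
        · have hl := length_substVar_nil_le x w₁
          simp [eqLen] at h2 ⊢; omega
        · simp only [e]; simp [hx] at h1 ⊢; omega
        · unfold IsSolution
          simp only [e]
          simpa [hx, hw] using hsol
    | cons β w₂ =>
      cases α with
      | inl a =>
        cases β with
        | inl b =>
          have hs : a :: applySub σ w₁ = b :: applySub σ w₂ := by simpa [IsSolution] using hsol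
          obtain ⟨rfl, hs'⟩ : a = b ∧ applySub σ w₁ = applySub σ w₂ := by simpa using hs
          refine Relation.ReflTransGen.head (Nielsen.p1 (Sum.inl a) w₁ w₂) ?_
          refine ihn ((applySub σ w₁).length + (applySub σ w₂).length) ?_
            (eqLen ((w₁, w₂) : Equation A V)) σ (w₁, w₂) le_rfl le_rfl hs'
          simp at h1; omega
        | inr y =>
          have hs : a :: applySub σ w₁ = σ y ++ applySub σ w₂ := by simpa [IsSolution] using hsol
          by_cases hy : σ y = []
          · -- erase y
            have e := applySub_substVar_nil σ y hy
            refine Relation.ReflTransGen.head (Nielsen.eraseR _ y w₂) ?_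
            refine ihm (eqLen ((substVar y [] (Sum.inl a :: w₁), substVar y [] w₂) :
              Equation A V)) ?_ σ _ ?_ le_rfl ?_
            · have hl₁ := length_substVar_nil_le y (Sum.inl a :: w₁)
              have hl₂ := length_substVar_nil_le y w₂
              simp only [eqLen] at h2 ⊢
              simp only [List.length_cons] at h2 hl₁
              omega
            · simp only [e]; simp [hy] at h1 ⊢; omega
            · unfold IsSolution
              simp only [e]
              simpa [hy] using hs
          · -- p2
            obtain ⟨t, ht⟩ : ∃ t, σ y = a :: t := by
              cases hyy : σ y with
              | nil => exact absurd hyy hy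
              | cons c t =>
                rw [hyy, List.cons_append] at hs
                injection hs with h1 _
                exact ⟨t, by rw [h1]⟩
            have hs' : applySub σ w₁ = t ++ applySub σ w₂ := by
              rw [ht] at hs; simpa using hs
            set σ' := Function.update σ y t with hσ'
            have hkey : applySub σ' [Sum.inl a, Sum.inr y] = σ y := by
              simp [hσ', Function.update_self, ht]
            have e : ∀ w : Word A V,
                applySub σ' (substVar y [Sum.inl a, Sum.inr y] w) = applySub σ w :=
              fun w => applySub_update_substVar σ y t _ w hkey
            refine Relation.ReflTransGen.head (Nielsen.p2 a y w₁ w₂) ?_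
            refine ihn _ ?_ _ σ' (substVar y [Sum.inl a, Sum.inr y] w₁,
              Sum.inr y :: substVar y [Sum.inl a, Sum.inr y] w₂) le_rfl le_rfl ?_
            · have hlen : (σ y).length = t.length + 1 := by rw [ht]; simp
              simp only [applySub_cons_inr, e]
              simp [hσ', Function.update_self] at h1 ⊢
              omega
            · unfold IsSolution
              simp only [applySub_cons_inr, e]
              simp [hσ', Function.update_self, hs']
      | inr x =>
        cases β with
        | inl a =>
          have hs : σ x ++ applySub σ w₁ = a :: applySub σ w₂ := by simpa [IsSolution] using hsol
          by_cases hx : σ x = []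
          · -- erase x
            have e := applySub_substVar_nil σ x hx
            refine Relation.ReflTransGen.head (Nielsen.eraseL x w₁ _) ?_
            refine ihm (eqLen ((substVar x [] w₁, substVar x [] (Sum.inl a :: w₂)) :
              Equation A V)) ?_ σ _ ?_ le_rfl ?_
            · have hl₁ := length_substVar_nil_le x w₁
              have hl₂ := length_substVar_nil_le x (Sum.inl a :: w₂)
              simp only [eqLen] at h2 ⊢
              simp only [List.length_cons] at h2 hl₂
              omega
            · simp only [e]; simp [hx] at h1 ⊢; omega
            · unfold IsSolution
              simp only [e]
              simpa [hx] using hs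
          · -- p3
            obtain ⟨t, ht⟩ : ∃ t, σ x = a :: t := by
              cases hxx : σ x with
              | nil => exact absurd hxx hx
              | cons c t =>
                rw [hxx, List.cons_append] at hs
                injection hs with h1 _
                exact ⟨t, by rw [h1]⟩
            have hs' : t ++ applySub σ w₁ = applySub σ w₂ := by
              rw [ht] at hs; simpa using hs
            set σ' := Function.update σ x t with hσ'
            have hkey : applySub σ' [Sum.inl a, Sum.inr x] = σ x := by
              simp [hσ', Function.update_self, ht]
            have e : ∀ w : Word A V,
                applySub σ' (substVar x [Sum.inl a, Sum.inr x] w) = applySub σ w :=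
              fun w => applySub_update_substVar σ x t _ w hkey
            refine Relation.ReflTransGen.head (Nielsen.p3 x a w₁ w₂) ?_
            refine ihn _ ?_ _ σ' (Sum.inr x :: substVar x [Sum.inl a, Sum.inr x] w₁,
              substVar x [Sum.inl a, Sum.inr x] w₂) le_rfl le_rfl ?_
            · have hlen : (σ x).length = t.length + 1 := by rw [ht]; simp
              simp only [applySub_cons_inr, e]
              simp [hσ', Function.update_self] at h1 ⊢
              omega
            · unfold IsSolution
              simp only [applySub_cons_inr, e]
              simp [hσ', Function.update_self, hs']
        | inr y =>
          have hs : σ x ++ applySub σ w₁ = σ y ++ applySub σ w₂ := by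
            simpa [IsSolution] using hsol
          by_cases hx : σ x = []
          · -- erase x
            have e := applySub_substVar_nil σ x hx
            refine Relation.ReflTransGen.head (Nielsen.eraseL x w₁ _) ?_
            refine ihm (eqLen ((substVar x [] w₁, substVar x [] (Sum.inr y :: w₂)) :
              Equation A V)) ?_ σ _ ?_ le_rfl ?_
            · have hl₁ := length_substVar_nil_le x w₁
              have hl₂ := length_substVar_nil_le x (Sum.inr y :: w₂)
              simp only [eqLen] at h2 ⊢
              simp only [List.length_cons] at h2 hl₂
              omega
            · simp only [e]; simp [hx] at h1 ⊢; omega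
            · unfold IsSolution
              simp only [e]
              simpa [hx] using hs
          by_cases hy : σ y = []
          · -- erase y
            have e := applySub_substVar_nil σ y hy
            refine Relation.ReflTransGen.head (Nielsen.eraseR _ y w₂) ?_
            refine ihm (eqLen ((substVar y [] (Sum.inr x :: w₁), substVar y [] w₂) :
              Equation A V)) ?_ σ _ ?_ le_rfl ?_
            · have hl₁ := length_substVar_nil_le y (Sum.inr x :: w₁)
              have hl₂ := length_substVar_nil_le y w₂
              simp only [eqLen] at h2 ⊢
              simp only [List.length_cons] at h2 hl₁
              omega
            · simp only [e]; simp [hy] at h1 ⊢; omega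
            · unfold IsSolution
              simp only [e]
              simpa [hy] using hs
          by_cases hxy : x = y
          · -- p1
            subst hxy
            have hs' : applySub σ w₁ = applySub σ w₂ := List.append_cancel_left hs
            have hxl : 0 < (σ x).length := List.length_pos_iff.mpr hx
            refine Relation.ReflTransGen.head (Nielsen.p1 (Sum.inr x) w₁ w₂) ?_
            refine ihn ((applySub σ w₁).length + (applySub σ w₂).length) ?_
              (eqLen ((w₁, w₂) : Equation A V)) σ (w₁, w₂) le_rfl le_rfl hs'
            simp at h1; omega
          · have hpre : σ x <+: σ y ∨ σ y <+: σ x := by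
              refine List.prefix_or_prefix_of_prefix (l₃ := σ x ++ applySub σ w₁)
                ⟨applySub σ w₁, rfl⟩ ?_
              rw [hs]; exact ⟨applySub σ w₂, rfl⟩
            rcases hpre with ⟨t, ht⟩ | ⟨t, ht⟩
            · -- p4L : σ y = σ x ++ t
              have hs' : applySub σ w₁ = t ++ applySub σ w₂ := by
                rw [← ht, List.append_assoc] at hs
                exact List.append_cancel_left hs
              set σ' := Function.update σ y t with hσ'
              have hkey : applySub σ' [Sum.inr x, Sum.inr y] = σ y := by
                simp [hσ', Function.update_self, Function.update_of_ne hxy, ht]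
              have e : ∀ w : Word A V,
                  applySub σ' (substVar y [Sum.inr x, Sum.inr y] w) = applySub σ w :=
                fun w => applySub_update_substVar σ y t _ w hkey
              refine Relation.ReflTransGen.head (Nielsen.p4L x y hxy w₁ w₂) ?_
              refine ihn _ ?_ _ σ' (substVar y [Sum.inr x, Sum.inr y] w₁,
                Sum.inr y :: substVar y [Sum.inr x, Sum.inr y] w₂) le_rfl le_rfl ?_
              · have hlen : (σ y).length = (σ x).length + t.length := by rw [← ht]; simp
                have hxl : 0 < (σ x).length := List.length_pos_iff.mpr hx
                simp only [applySub_cons_inr, e]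
                simp [hσ', Function.update_self] at h1 ⊢
                omega
              · unfold IsSolution
                simp only [applySub_cons_inr, e]
                simp [hσ', Function.update_self, hs']
            · -- p4R : σ x = σ y ++ t
              have hs' : t ++ applySub σ w₁ = applySub σ w₂ := by
                rw [← ht, List.append_assoc] at hs
                exact List.append_cancel_left hs
              set σ' := Function.update σ x t with hσ'
              have hkey : applySub σ' [Sum.inr y, Sum.inr x] = σ x := by
                simp [hσ', Function.update_self, Function.update_of_ne (Ne.symm hxy), ht]
              have e : ∀ w : Word A V,
                  applySub σ' (substVar x [Sum.inr y, Sum.inr x] w) = applySub σ w :=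
                fun w => applySub_update_substVar σ x t _ w hkey
              refine Relation.ReflTransGen.head (Nielsen.p4R x y hxy w₁ w₂) ?_
              refine ihn _ ?_ _ σ' (Sum.inr x :: substVar x [Sum.inr y, Sum.inr x] w₁,
                substVar x [Sum.inr y, Sum.inr x] w₂) le_rfl le_rfl ?_
              · have hlen : (σ x).length = (σ y).length + t.length := by rw [← ht]; simp
                have hyl : 0 < (σ y).length := List.length_pos_iff.mpr hy
                simp only [applySub_cons_inr, e]
                simp [hσ', Function.update_self] at h1 ⊢
                omega
              · unfold IsSolution
                simp only [applySub_cons_inr, e]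
                simp [hσ', Function.update_self, hs']

/-- A quadratic word equation has a solution iff the trivial
equation `ε = ε` is reachable from it under the Nielsen transformation. -/
theorem quadratic_solvable_iff_nielsen_reaches_trivial
    [Finite A] [Finite V] [DecidableEq A] [DecidableEq V]
    (E : Equation A V) (hq : Quadratic E) :
    (∃ σ : V → List A, IsSolution σ E) ↔
      Relation.ReflTransGen Nielsen E (([], []) : Equation A V) := by
  constructor
  · rintro ⟨σ, hσ⟩
    exact reaches_trivial _ _ σ E le_rfl le_rfl hσ
  · intro h
    clear hq
    induction h using Relation.ReflTransGen.head_induction_on with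
    | refl => exact ⟨fun _ => [], rfl⟩
    | head hstep _ ih => exact sol_of_step hstep ih

end WordEq
end

section
/- If E is a quadratic word equation and E ⇒ E' is a step of the Nielsen transformation, then the length of E' is at most the length of E, i.e., |E'| ≤ |E|. -/
namespace WordEq

variable {A V : Type*}

instance sumLawfulBEq [DecidableEq A] [DecidableEq V] : LawfulBEq (A ⊕ V) where
  eq_of_beq := by
    intro a b h
    cases a <;> cases b
    · exact congrArg Sum.inl (eq_of_beq (show ((_ : A) == _) = true from h))
    · exact Bool.noConfusion h
    · exact Bool.noConfusion h
    · exact congrArg Sum.inr (eq_of_beq (show ((_ : V) == _) = true from h))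
  rfl := by
    intro a
    cases a
    · exact (beq_self_eq_true (_ : A) : _)
    · exact (beq_self_eq_true (_ : V) : _)

lemma substVar_length [DecidableEq A] [DecidableEq V] (x : V) (r : Word A V) (w : Word A V) :
    (substVar x r w).length + w.count (Sum.inr x) =
      w.length + r.length * w.count (Sum.inr x) := by
  induction w with
  | nil => simp [substVar]
  | cons s w ih =>
    have hsub : substVar x r (s :: w) = (match s with
      | Sum.inl a => [Sum.inl a]
      | Sum.inr y => if y = x then r else [Sum.inr y]) ++ substVar x r w := rfl
    rcases s with a | y
    · simp only [hsub, List.length_append, List.count_cons, List.length_cons,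
        beq_iff_eq, reduceCtorEq, if_false]
      simpa using by omega
    · by_cases hy : y = x
      · subst hy
        simp only [hsub, List.length_append, List.count_cons_self,
          List.length_cons, Nat.mul_add, Nat.mul_one]
        rw [if_pos trivial]
        omega
      · simp only [hsub, if_neg hy, List.length_append, List.count_cons,
          List.length_cons, beq_iff_eq, Sum.inr.injEq, if_neg hy]
        simpa using by omega

lemma substVar_nil_length [DecidableEq A] [DecidableEq V] (x : V) (w : Word A V) :
    (substVar x [] w).length ≤ w.length := by
  have := substVar_length x ([] : Word A V) w
  simp at this
  omega

lemma substVar_two_length [DecidableEq A] [DecidableEq V] (x : V) (r : Word A V)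
    (hr : r.length = 2) (w : Word A V) :
    (substVar x r w).length = w.length + w.count (Sum.inr x) := by
  have := substVar_length x r w
  rw [hr] at this
  omega

/-- A Nielsen transformation step never increases the length
of a quadratic word equation. -/
theorem nielsen_length_le
    [Finite A] [Finite V] [DecidableEq A] [DecidableEq V]
    {E E' : Equation A V} (hq : Quadratic E) (h : Nielsen E E') :
    eqLen E' ≤ eqLen E := by
  cases h with
  | eraseL x w₁ w₂ =>
    have h1 := substVar_nil_length x w₁
    have h2 := substVar_nil_length x w₂
    simp [eqLen]; omega
  | eraseR w₁ x w₂ =>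
    have h1 := substVar_nil_length x w₁
    have h2 := substVar_nil_length x w₂
    simp [eqLen]; omega
  | p1 α w₁ w₂ => simp [eqLen]; omega
  | p2 a y w₁ w₂ =>
    have hc := hq y
    simp [varCount, List.count_append, List.count_cons, beq_iff_eq] at hc
    have h1 := substVar_two_length y [Sum.inl a, Sum.inr y] rfl w₁
    have h2 := substVar_two_length y [Sum.inl a, Sum.inr y] rfl w₂
    simp [eqLen, h1, h2]; omega
  | p3 x a w₁ w₂ =>
    have hc := hq x
    simp [varCount, List.count_append, List.count_cons, beq_iff_eq] at hc
    have h1 := substVar_two_length x [Sum.inl a, Sum.inr x] rfl w₁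
    have h2 := substVar_two_length x [Sum.inl a, Sum.inr x] rfl w₂
    simp [eqLen, h1, h2]; omega
  | p4L x y hxy w₁ w₂ =>
    have hc := hq y
    simp [varCount, List.count_append, List.count_cons, beq_iff_eq, Ne.symm hxy] at hc
    have h1 := substVar_two_length y [Sum.inr x, Sum.inr y] rfl w₁
    have h2 := substVar_two_length y [Sum.inr x, Sum.inr y] rfl w₂
    simp [eqLen, h1, h2]; omega
  | p4R x y hxy w₁ w₂ =>
    have hc := hq x
    simp [varCount, List.count_append, List.count_cons, beq_iff_eq, hxy] at hc
    have h1 := substVar_two_length x [Sum.inr y, Sum.inr x] rfl w₁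
    have h2 := substVar_two_length x [Sum.inr y, Sum.inr x] rfl w₂
    simp [eqLen, h1, h2]; omega

end WordEq
end

section
/- Let A be an alphabet containing two distinct letters a and b. For all natural numbers n_x, n_y, n_z: there exist words u, v, w ∈ A* with |u| = n_x, |v| = n_y, |w| = n_z and u·ab·v = v·w if and only if n_z = n_x + 2. In other words, the length abstraction of the quadratic word equation x·ab·y = y·z is {(n_x, n_y, n_z) ∈ ℕ³ : n_z = n_x + 2}. -/
/-- Over an alphabet containing two distinct letters `a` and
`b`, the length abstraction of the quadratic word equation `x·ab·y = y·z` is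
`{(n_x, n_y, n_z) : n_z = n_x + 2}`: for all naturals `n_x, n_y, n_z` there
are words `u, v, w` of these lengths with `u ++ ab ++ v = v ++ w` iff
`n_z = n_x + 2`. -/
theorem lenAbs_xaby_eq_yz {A : Type*} (a b : A) (hab : a ≠ b)
    (nx ny nz : ℕ) :
    (∃ u v w : List A,
        u.length = nx ∧ v.length = ny ∧ w.length = nz ∧
          u ++ [a, b] ++ v = v ++ w) ↔ nz = nx + 2 := by
  constructor
  · rintro ⟨u, v, w, hu, hv, hw, h⟩
    have := congrArg List.length h
    simp [hu, hv, hw] at this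
    omega
  · rintro rfl
    set s : List A := List.replicate (nx + 1) a ++ [b] with hs
    have hslen : s.length = nx + 2 := by simp [hs]
    set J : List A := (List.replicate ny s).flatten with hJ
    have hJlen : J.length = ny * (nx + 2) := by
      simp [hJ, hslen, mul_comm]
    have hJge : ny ≤ J.length := by rw [hJlen]; nlinarith
    have hcomm : s ++ J = J ++ s := by
      have h1 : s ++ J = (List.replicate (ny + 1) s).flatten := by
        rw [List.replicate_succ]; simp [hJ]
      have h2 : J ++ s = (List.replicate (ny + 1) s).flatten := by
        rw [List.replicate_succ']; simp [hJ]
      rw [h1, h2]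
    have key : (s ++ J.take ny).take ny = J.take ny := by
      have h3 : s ++ J.take ny = (s ++ J).take (s.length + ny) := by
        rw [List.take_length_add_append]
      rw [h3, List.take_take, min_eq_left (by omega), hcomm,
        List.take_append_of_le_length hJge]
    refine ⟨List.replicate nx a, J.take ny, (s ++ J.take ny).drop ny,
      by simp, by simp [hJge], ?_, ?_⟩
    · rw [List.length_drop]
      simp [hslen, min_eq_left hJge]
    · have hu : List.replicate nx a ++ [a, b] = s := by
        have : List.replicate (nx + 1) a = List.replicate nx a ++ [a] :=
          List.replicate_succ' ..
        simp [hs, this]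
      rw [hu]
      conv_lhs => rw [← List.take_append_drop ny (s ++ J.take ny)]
      rw [key]
end

section
/- Let A be an alphabet containing two distinct letters a and b. The set S = {(m, n) ∈ ℕ² : there exist u, v ∈ A* with |u| = m, |v| = n and u·ab·v = v·ab·u} is not semilinear. Consequently, there is a quadratic word equation (namely x·ab·y = y·ab·x) whose length abstraction is not Presburger-definable. -/
/-- A linear subset of a commutative monoid: a base point plus all
`ℕ`-combinations of finitely many periods. -/
def IsLinearSet' {M : Type*} [AddCommMonoid M] (S : Set M) : Prop :=
  ∃ (b : M) (m : ℕ) (p : Fin m → M),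
    S = {v | ∃ lam : Fin m → ℕ, v = b + ∑ i, lam i • p i}

/-- A semilinear set is a finite union of linear sets.  By the
Ginsburg–Spanier theorem, a subset of `ℕ^k` is Presburger-definable iff it is
semilinear. -/
def IsSemilinearSet' {M : Type*} [AddCommMonoid M] (S : Set M) : Prop :=
  ∃ (n : ℕ) (T : Fin n → Set M), (∀ i, IsLinearSet' (T i)) ∧ S = ⋃ i, T i

namespace WPf
set_option linter.unusedTactic false
set_option linter.unnecessarySimpa false

/-- `pw t n = t ++ t ++ ... ++ t` (n times). -/
def pw (t : List α) : ℕ → List α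
  | 0 => []
  | n+1 => t ++ pw t n

theorem pw_length (t : List α) (n : ℕ) : (pw t n).length = n * t.length := by
  induction n with
  | zero => simp [pw]
  | succ n ih => simp [pw, ih]; ring

theorem pw_add (t : List α) (m n : ℕ) : pw t (m + n) = pw t m ++ pw t n := by
  induction m with
  | zero => simp [pw]
  | succ m ih => rw [Nat.succ_add]; simp [pw, ih]

theorem comm_words : ∀ n (x y : List α), x.length + y.length ≤ n → x ++ y = y ++ x →
    ∃ (t : List α) (i j : ℕ), x = pw t i ∧ y = pw t j := by
  intro n
  induction n with
  | zero =>
    intro x y hlen _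
    have hx : x = [] := by
      cases x with | nil => rfl | cons a l => simp at hlen
    have hy : y = [] := by
      cases y with | nil => rfl | cons a l => simp [Nat.add_comm] at hlen
    exact ⟨[], 0, 0, by simp [hx, pw], by simp [hy, pw]⟩
  | succ n ih =>
    intro x y hlen h
    rcases eq_or_ne x [] with hx | hx
    · exact ⟨y, 0, 1, by simp [hx, pw], by simp [pw]⟩
    rcases eq_or_ne y [] with hy | hy
    · exact ⟨x, 1, 0, by simp [pw], by simp [hy, pw]⟩
    rcases le_total x.length y.length with hle | hle
    · -- x is a prefix of y
      have hxy : x = y.take x.length := by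
        have := congrArg (List.take x.length) h
        rw [List.take_append_of_le_length le_rfl, List.take_append_of_le_length hle] at this
        simpa using this
      set z := y.drop x.length with hz
      have hyz : y = x ++ z := by
        conv_lhs => rw [← List.take_append_drop x.length y, ← hxy]
      have hcomm : x ++ z = z ++ x := by
        have h2 : x ++ (x ++ z) = (x ++ z) ++ x := by rw [← hyz, h]
        rw [List.append_assoc] at h2
        exact (List.append_cancel_left h2)
      have hzlen : z.length < y.length := by
        have hx0 : 0 < x.length := List.length_pos_iff.mpr hx
        have : z.length = y.length - x.length := by simp [hz]
        omega
      obtain ⟨t, i, j, hxt, hzt⟩ := ih x z (by omega) hcomm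
      exact ⟨t, i, i + j, hxt, by rw [hyz, pw_add, hxt, hzt]⟩
    · -- y is a prefix of x
      have hxy : y = x.take y.length := by
        have := congrArg (List.take y.length) h.symm
        rw [List.take_append_of_le_length le_rfl, List.take_append_of_le_length hle] at this
        simpa using this
      set z := x.drop y.length with hz
      have hyz : x = y ++ z := by
        conv_lhs => rw [← List.take_append_drop y.length x, ← hxy]
      have hcomm : y ++ z = z ++ y := by
        have h2 : y ++ (y ++ z) = (y ++ z) ++ y := by rw [← hyz, h.symm]
        rw [List.append_assoc] at h2
        exact (List.append_cancel_left h2)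
      have hzlen : z.length < x.length := by
        have hy0 : 0 < y.length := List.length_pos_iff.mpr hy
        have : z.length = x.length - y.length := by simp [hz]
        omega
      obtain ⟨t, i, j, hyt, hzt⟩ := ih y z (by omega) hcomm
      exact ⟨t, i + j, i, by rw [hyz, pw_add, hyt, hzt], hyt⟩

/-- If `u ++ [a,b] ++ v = v ++ [a,b] ++ u` with `a ≠ b`, then some `g ≥ 2`
divides both `|u|+2` and `|v|+2`. -/
theorem key_dvd {a b : α} (hab : a ≠ b) {u v : List α}
    (h : u ++ [a, b] ++ v = v ++ [a, b] ++ u) :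
    ∃ g, 2 ≤ g ∧ g ∣ u.length + 2 ∧ g ∣ v.length + 2 := by
  have hc : (u ++ [a, b]) ++ (v ++ [a, b]) = (v ++ [a, b]) ++ (u ++ [a, b]) := by
    have := congrArg (· ++ [a, b]) h
    simpa [List.append_assoc] using this
  obtain ⟨t, i, j, hx, hy⟩ :=
    comm_words ((u ++ [a,b]).length + (v ++ [a,b]).length) _ _ le_rfl hc
  have hxlen : u.length + 2 = i * t.length := by
    have := congrArg List.length hx
    simpa [pw_length] using this
  have hylen : v.length + 2 = j * t.length := by
    have := congrArg List.length hy
    simpa [pw_length] using this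
  refine ⟨t.length, ?_, ⟨i, by rw [hxlen]; ring⟩, ⟨j, by rw [hylen]; ring⟩⟩
  -- t.length ≥ 2 : otherwise a = b or contradiction
  by_contra hlt
  push_neg at hlt
  interval_cases ht : t.length
  · omega
  · -- t = [s], so u ++ [a,b] = replicate of s
    obtain ⟨s, hs⟩ : ∃ s, t = [s] := by
      cases t with
      | nil => simp at ht
      | cons s l => cases l with
        | nil => exact ⟨s, rfl⟩
        | cons _ _ => simp at ht
    have hrep : ∀ n, pw t n = List.replicate n s := by
      intro n
      induction n with
      | zero => simp [pw]
      | succ n ihn => rw [pw, ihn, hs, List.replicate_succ]; rfl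
    have ha : a = s := by
      have : a ∈ pw t i := by rw [← hx]; simp
      rw [hrep] at this
      exact List.eq_of_mem_replicate this
    have hb : b = s := by
      have : b ∈ pw t i := by rw [← hx]; simp
      rw [hrep] at this
      exact List.eq_of_mem_replicate this
    exact hab (ha.trans hb.symm)


/-- Construction: if `g ≥ 2` divides `m+2` and `n+2`, there are words `u, v`
of lengths `m, n` with `u ++ [a,b] ++ v = v ++ [a,b] ++ u`. -/
theorem key_construct (a b : α) {g m n : ℕ} (hg : 2 ≤ g)
    (hm : g ∣ m + 2) (hn : g ∣ n + 2) :
    ∃ u v : List α, u.length = m ∧ v.length = n ∧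
      u ++ [a, b] ++ v = v ++ [a, b] ++ u := by
  obtain ⟨i, hi⟩ := hm
  obtain ⟨j, hj⟩ := hn
  obtain ⟨i', rfl⟩ : ∃ i', i = i' + 1 := by
    cases i with
    | zero => omega
    | succ i' => exact ⟨i', rfl⟩
  obtain ⟨j', rfl⟩ : ∃ j', j = j' + 1 := by
    cases j with
    | zero => omega
    | succ j' => exact ⟨j', rfl⟩
  set w : List α := List.replicate (g - 2) a with hw
  set t : List α := w ++ [a, b] with ht
  have htlen : t.length = g := by simp [ht, hw]; omega
  refine ⟨pw t i' ++ w, pw t j' ++ w, ?_, ?_, ?_⟩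
  · have : (pw t i' ++ w).length = i' * g + (g - 2) := by simp [pw_length, htlen, hw]
    have h2 : m + 2 = i' * g + g := by rw [hi]; ring
    omega
  · have : (pw t j' ++ w).length = j' * g + (g - 2) := by simp [pw_length, htlen, hw]
    have h2 : n + 2 = j' * g + g := by rw [hj]; ring
    omega
  · have key : ∀ k l : ℕ, (pw t k ++ w) ++ [a, b] ++ (pw t l ++ w)
        = pw t (k + l + 1) ++ w := by
      intro k l
      have : pw t (k + l + 1) = pw t k ++ (t ++ pw t l) := by
        rw [Nat.add_assoc, pw_add]; rfl
      rw [this, ht]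
      simp [List.append_assoc]
    rw [key, key, Nat.add_comm i' j']

theorem coprime_of_no_common_prime {A B : ℕ}
    (h : ∀ ℓ, ℓ.Prime → ℓ ∣ A → ℓ ∣ B → False) : Nat.Coprime A B := by
  by_contra hc
  obtain ⟨ℓ, hℓ, hA, hB⟩ := Nat.Prime.not_coprime_iff_dvd.mp hc
  exact h ℓ hℓ hA hB

theorem exists_coprime_progression (a b M : ℕ) (hM : 0 < M)
    (H : ∀ ℓ, ℓ.Prime → ℓ ∣ M → ℓ ∣ a → ℓ ∣ b → False) (N : ℕ) :
    ∃ k, N ≤ k ∧ Nat.Coprime (a + k * b) M := by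
  set k0 : ℕ := ∏ ℓ ∈ M.primeFactors.filter (fun ℓ => ¬ ℓ ∣ a), ℓ with hk0
  refine ⟨k0 + N * M, by nlinarith, ?_⟩
  apply coprime_of_no_common_prime
  intro ℓ hℓ hA hMdvd
  by_cases hla : ℓ ∣ a
  · have hkb : ℓ ∣ (k0 + N * M) * b := by
      have h2 := Nat.dvd_sub hA hla
      simpa using h2
    rcases (Nat.Prime.dvd_mul hℓ).mp hkb with hk | hb
    · -- ℓ ∣ k0 + N*M and ℓ ∣ M forces ℓ ∣ k0, i.e. ℓ in the filter: contra with ℓ ∣ a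
      have hlk0 : ℓ ∣ k0 := by
        have h3 := Nat.dvd_sub hk (Dvd.dvd.mul_left hMdvd N)
        simpa using h3
      have := (Nat.Prime.prime hℓ).dvd_finset_prod_iff (fun x : ℕ => x) |>.mp hlk0
      obtain ⟨ℓ', hmem, hdvd⟩ := this
      rw [Finset.mem_filter] at hmem
      have hℓ' : ℓ'.Prime := Nat.prime_of_mem_primeFactors hmem.1
      have : ℓ = ℓ' := ((Nat.prime_dvd_prime_iff_eq hℓ hℓ').mp hdvd)
      exact hmem.2 (this ▸ hla)
    · exact H ℓ hℓ hMdvd hla hb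
  · have hmem : ℓ ∈ M.primeFactors.filter (fun ℓ => ¬ ℓ ∣ a) := by
      simp only [Finset.mem_filter, Nat.mem_primeFactors]
      exact ⟨⟨hℓ, hMdvd, by omega⟩, hla⟩
    have hlk0 : ℓ ∣ k0 := Finset.dvd_prod_of_mem _ hmem
    have : ℓ ∣ (k0 + N * M) * b := Dvd.dvd.mul_right (hlk0.add (Dvd.dvd.mul_left hMdvd N)) b
    have : ℓ ∣ a := by
      have h2 := Nat.dvd_sub hA this
      simpa using h2
    exact hla this

noncomputable def fp : ℕ → ℕ
  | 0 => 3
  | k+1 => Classical.choose (Nat.exists_infinite_primes ((fp k)^2 + 1))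

theorem fp_succ_gt (k : ℕ) : (fp k)^2 < fp (k+1) :=
  (Classical.choose_spec (Nat.exists_infinite_primes ((fp k)^2 + 1))).1

theorem fp_prime : ∀ k, (fp k).Prime
  | 0 => by norm_num [fp]
  | k+1 => (Classical.choose_spec (Nat.exists_infinite_primes ((fp k)^2 + 1))).2

theorem fp_ge3 : ∀ k, 3 ≤ fp k
  | 0 => le_refl _
  | k+1 => by have h1 := fp_succ_gt k; have h2 := fp_ge3 k; nlinarith

theorem fp_strictMono : StrictMono fp := by
  apply strictMono_nat_of_lt_succ
  intro k
  have h1 := fp_succ_gt k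
  have h2 := fp_ge3 k
  nlinarith

theorem fp_sq_lt {i j : ℕ} (h : i < j) : (fp i)^2 < fp j := by
  calc (fp i)^2 < fp (i+1) := fp_succ_gt i
    _ ≤ fp j := fp_strictMono.le_iff_le.mpr h

/-- The key number-theoretic step: given odd-ish primes `p < q` with `p² < q`,
and data `c₀ d₀ s1 s2 t1 t2` with `c₀ + s1 = p`, `d₀ + s2 = p²`, `c₀ + t1 = q`,
`d₀ + t2 = q²`, `2 ≤ c₀`, `2 ≤ d₀`, there exist `k l` such that the combined
point has coprime coordinates. -/
theorem key_nt {p q c₀ d₀ s1 s2 t1 t2 : ℕ}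
    (hp : p.Prime) (hq : q.Prime) (hp3 : 3 ≤ p) (hpq : p^2 < q)
    (hc₀ : 2 ≤ c₀) (hd₀ : 2 ≤ d₀)
    (e1 : c₀ + s1 = p) (e2 : d₀ + s2 = p^2)
    (e3 : c₀ + t1 = q) (e4 : d₀ + t2 = q^2) :
    ∃ k l : ℕ, Nat.Coprime (c₀ + (k * s1 + l * t1)) (d₀ + (k * s2 + l * t2)) := by
  have hppsq : p ≤ p^2 := by nlinarith
  have hplq : p < q := by omega
  have hpnq : ¬ p ∣ q := by
    intro hd
    have := (Nat.prime_dvd_prime_iff_eq hp hq).mp hd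
    omega
  rcases Nat.eq_zero_or_pos s1 with hs1 | hs1
  · rcases Nat.eq_zero_or_pos s2 with hs2 | hs2
    · -- case (iii): b = v_i; use k = 0, l = 2
      subst hs1; subst hs2
      refine ⟨0, 2, coprime_of_no_common_prime ?_⟩
      intro ℓ hℓ hA0 hB0
      have e3x : p + t1 = q := by omega
      have e4x : p^2 + t2 = q^2 := by omega
      have hA : ℓ ∣ p + 2 * t1 := by
        have h : c₀ + (0 * 0 + 2 * t1) = p + 2 * t1 := by omega
        rwa [h] at hA0
      have hB : ℓ ∣ p^2 + 2 * t2 := by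
        have h : d₀ + (0 * 0 + 2 * t2) = p^2 + 2 * t2 := by omega
        rwa [h] at hB0
      have ht1 : (t1 : ℤ) = (q:ℤ) - p := by
        have h : ((p:ℤ) + t1) = q := by exact_mod_cast congrArg (Nat.cast (R := ℤ)) e3x
        linarith
      have ht2 : (t2 : ℤ) = (q:ℤ)^2 - (p:ℤ)^2 := by
        have h : ((p:ℤ)^2 + t2) = (q:ℤ)^2 := by exact_mod_cast congrArg (Nat.cast (R := ℤ)) e4x
        linarith
      have hAZ : (ℓ:ℤ) ∣ ((p:ℤ) + 2 * t1) := by exact_mod_cast Int.natCast_dvd_natCast.mpr hA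
      have hBZ : (ℓ:ℤ) ∣ ((p:ℤ)^2 + 2 * t2) := by exact_mod_cast Int.natCast_dvd_natCast.mpr hB
      have hpq' : (ℓ:ℤ) ∣ (p:ℤ) * q := by
        have h1 : (ℓ:ℤ) ∣ ((q:ℤ) + p) * ((p:ℤ) + 2 * t1) - ((p:ℤ)^2 + 2 * t2) :=
          dvd_sub (hAZ.mul_left _) hBZ
        have h2 : ((q:ℤ) + p) * ((p:ℤ) + 2 * t1) - ((p:ℤ)^2 + 2 * t2) = (p:ℤ) * q := by
          rw [ht1, ht2]; ring
        rwa [h2] at h1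
      have hlpq : ℓ ∣ p * q := by exact_mod_cast hpq'
      rcases (Nat.Prime.dvd_mul hℓ).mp hlpq with hlp | hlq
      · have hep : ℓ = p := (Nat.prime_dvd_prime_iff_eq hℓ hp).mp hlp
        have h2t : ℓ ∣ 2 * t1 := by
          have h := Nat.dvd_sub hA (show ℓ ∣ p by rw [hep])
          simpa [Nat.add_sub_cancel_left] using h
        rcases (Nat.Prime.dvd_mul hℓ).mp h2t with h2 | ht
        · have := Nat.le_of_dvd (by norm_num) h2
          have := hℓ.two_le
          omega
        · refine hpnq ?_
          rw [← e3x, ← hep]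
          exact (dvd_refl ℓ).add ht
      · have heq : ℓ = q := (Nat.prime_dvd_prime_iff_eq hℓ hq).mp hlq
        have hqp : (ℓ:ℤ) ∣ (p:ℤ) := by
          have h1 : (ℓ:ℤ) ∣ 2 * (q:ℤ) - ((p:ℤ) + 2 * t1) := by
            refine dvd_sub ⟨2, by rw [heq]; push_cast; ring⟩ hAZ
          have h2 : 2 * (q:ℤ) - ((p:ℤ) + 2 * t1) = p := by rw [ht1]; ring
          rwa [h2] at h1
        have hlp : ℓ ∣ p := by exact_mod_cast hqp
        have := Nat.le_of_dvd (by omega) hlp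
        omega
    · -- case (ii): s1 = 0, s2 > 0
      subst hs1
      have hc₀p : c₀ = p := by omega
      have e3x : p + t1 = q := by omega
      have ht1pos : 0 < t1 := by omega
      have H1 : ∀ ℓ, ℓ.Prime → ℓ ∣ s2 → ℓ ∣ p → ℓ ∣ t1 → False := by
        intro ℓ hℓ _ hlp hlt
        have hep : ℓ = p := (Nat.prime_dvd_prime_iff_eq hℓ hp).mp hlp
        refine hpnq ?_
        rw [← e3x]
        exact (dvd_refl p).add (hep ▸ hlt)
      obtain ⟨L, -, hcop1⟩ := exists_coprime_progression p t1 s2 hs2 H1 0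
      have hA0 : 0 < p + L * t1 := by omega
      have H2 : ∀ ℓ, ℓ.Prime → ℓ ∣ (p + L * t1) → ℓ ∣ (d₀ + L * t2) → ℓ ∣ s2 → False := by
        intro ℓ hℓ hlA _ hls
        have h1 : ℓ ∣ 1 := hcop1 ▸ Nat.dvd_gcd hlA hls
        have := Nat.le_of_dvd one_pos h1
        have := hℓ.two_le
        omega
      obtain ⟨k, -, hcop2⟩ := exists_coprime_progression (d₀ + L * t2) s2 (p + L * t1) hA0 H2 0
      refine ⟨k, L, ?_⟩
      have hA : c₀ + (k * 0 + L * t1) = p + L * t1 := by omega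
      have hB : d₀ + (k * s2 + L * t2) = (d₀ + L * t2) + k * s2 := by ring
      rw [hA, hB]
      exact (Nat.coprime_comm.mp hcop2)
  · -- case (i): s1 > 0
    have hs1p : s1 < q := by omega
    have hs2q : s2 < q := by omega
    have hqle : q ≤ q * s1 := Nat.le_mul_of_pos_right q hs1
    have hEE : s2 < q * s1 := by omega
    set M : ℕ := q * (q * s1 - s2) with hM
    have hM0 : 0 < M := by
      have : 0 < q * s1 - s2 := by omega
      exact Nat.mul_pos (by omega) this
    have H : ∀ ℓ, ℓ.Prime → ℓ ∣ M → ℓ ∣ q → ℓ ∣ s1 → False := by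
      intro ℓ hℓ _ hlq hls
      have heq : ℓ = q := (Nat.prime_dvd_prime_iff_eq hℓ hq).mp hlq
      subst heq
      have := Nat.le_of_dvd hs1 hls
      omega
    obtain ⟨k, -, hcop⟩ := exists_coprime_progression q s1 M hM0 H 0
    refine ⟨k, 1, coprime_of_no_common_prime ?_⟩
    intro ℓ hℓ hA hB
    have hA' : ℓ ∣ q + k * s1 := by
      have : c₀ + (k * s1 + 1 * t1) = q + k * s1 := by omega
      rwa [this] at hA
    have hB' : ℓ ∣ q^2 + k * s2 := by
      have : d₀ + (k * s2 + 1 * t2) = q^2 + k * s2 := by omega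
      rwa [this] at hB
    have hMZ : (ℓ:ℤ) ∣ (M:ℤ) := by
      have h1 : (ℓ:ℤ) ∣ (s2:ℤ) * ((q:ℤ) + k * s1) - (s1:ℤ) * ((q:ℤ)^2 + k * s2) := by
        refine dvd_sub (Dvd.dvd.mul_left ?_ _) (Dvd.dvd.mul_left ?_ _)
        · exact_mod_cast Int.natCast_dvd_natCast.mpr hA'
        · exact_mod_cast Int.natCast_dvd_natCast.mpr hB'
      have h2 : (s2:ℤ) * ((q:ℤ) + k * s1) - (s1:ℤ) * ((q:ℤ)^2 + k * s2) = -(M:ℤ) := by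
        rw [hM]
        push_cast [Nat.cast_sub (le_of_lt hEE)]
        ring
      rw [h2] at h1
      exact (dvd_neg.mp h1)
    have hMn : ℓ ∣ M := by exact_mod_cast hMZ
    have : ℓ ∣ 1 := hcop ▸ Nat.dvd_gcd hA' hMn
    have := Nat.le_of_dvd one_pos this
    have := hℓ.two_le
    omega


theorem not_semilinear_T :
    ¬ IsSemilinearSet' {x : ℕ × ℕ | ∃ g, 2 ≤ g ∧ g ∣ x.1 + 2 ∧ g ∣ x.2 + 2} := by
  intro hsemi
  obtain ⟨n, T, hlin, hS⟩ := hsemi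
  set v : ℕ → ℕ × ℕ := fun k => (fp k - 2, (fp k)^2 - 2) with hv
  have hv1 : ∀ k, (v k).1 + 2 = fp k := by
    intro k; have := fp_ge3 k; simp only [hv]; omega
  have hv2 : ∀ k, (v k).2 + 2 = (fp k)^2 := by
    intro k
    have h := fp_ge3 k
    have h9 : 9 ≤ (fp k)^2 := by nlinarith
    simp only [hv]; omega
  have hvS : ∀ k, v k ∈ {x : ℕ × ℕ | ∃ g, 2 ≤ g ∧ g ∣ x.1 + 2 ∧ g ∣ x.2 + 2} := by
    intro k
    refine ⟨fp k, by have := fp_ge3 k; omega, ?_, ?_⟩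
    · rw [hv1]
    · rw [hv2]; exact dvd_pow_self _ (by norm_num)
  have hcell : ∀ k, ∃ i, v k ∈ T i := by
    intro k
    have h := hvS k
    rw [hS] at h
    exact Set.mem_iUnion.mp h
  choose c hc using hcell
  have main : ∀ i j : ℕ, i < j → c i = c j → False := by
    intro i j hij hcij
    obtain ⟨β, m, P, hLP⟩ := hlin (c i)
    have hvi := hc i
    have hvj := hc j
    rw [← hcij] at hvj
    rw [hLP] at hvi hvj
    obtain ⟨lam1, h1⟩ := hvi
    obtain ⟨lam2, h2⟩ := hvj
    set s : ℕ × ℕ := ∑ x, lam1 x • P x with hsdef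
    set t : ℕ × ℕ := ∑ x, lam2 x • P x with htdef
    have e1 : (β.1 + 2) + s.1 = fp i := by
      have := congrArg Prod.fst h1
      simp only [Prod.fst_add] at this
      have hx := hv1 i
      omega
    have e2 : (β.2 + 2) + s.2 = (fp i)^2 := by
      have := congrArg Prod.snd h1
      simp only [Prod.snd_add] at this
      have hx := hv2 i
      omega
    have e3 : (β.1 + 2) + t.1 = fp j := by
      have := congrArg Prod.fst h2
      simp only [Prod.fst_add] at this
      have hx := hv1 j
      omega
    have e4 : (β.2 + 2) + t.2 = (fp j)^2 := by
      have := congrArg Prod.snd h2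
      simp only [Prod.snd_add] at this
      have hx := hv2 j
      omega
    obtain ⟨k, l, hcop⟩ := key_nt (fp_prime i) (fp_prime j) (fp_ge3 i) (fp_sq_lt hij)
      (by omega) (by omega) e1 e2 e3 e4
    -- the combined point lies in the set
    have hpt : β + (k • s + l • t) ∈ {x : ℕ × ℕ | ∃ g, 2 ≤ g ∧ g ∣ x.1 + 2 ∧ g ∣ x.2 + 2} := by
      rw [hS]
      refine Set.mem_iUnion.mpr ⟨c i, ?_⟩
      rw [hLP]
      refine ⟨fun x => k * lam1 x + l * lam2 x, ?_⟩
      congr 1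
      rw [hsdef, htdef, Finset.smul_sum, Finset.smul_sum, ← Finset.sum_add_distrib]
      exact Finset.sum_congr rfl fun x _ => by rw [add_smul, mul_smul, mul_smul]
    obtain ⟨g, hg2, hgA, hgB⟩ := hpt
    have hcoord1 : (β + (k • s + l • t)).1 + 2 = (β.1 + 2) + (k * s.1 + l * t.1) := by
      simp only [Prod.fst_add, Prod.smul_fst, smul_eq_mul]
      ring
    have hcoord2 : (β + (k • s + l • t)).2 + 2 = (β.2 + 2) + (k * s.2 + l * t.2) := by
      simp only [Prod.snd_add, Prod.smul_snd, smul_eq_mul]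
      ring
    rw [hcoord1] at hgA
    rw [hcoord2] at hgB
    have hdvd1 : g ∣ 1 := hcop ▸ Nat.dvd_gcd hgA hgB
    have := Nat.le_of_dvd one_pos hdvd1
    omega
  obtain ⟨i, j, hne, hcij⟩ := Finite.exists_ne_map_eq_of_infinite c
  rcases hne.lt_or_gt with h | h
  · exact main _ _ h hcij
  · exact main _ _ h hcij.symm

end WPf

namespace WordEq

variable {A V : Type*}

/-- The length abstraction of a word equation: the set of tuples of lengths of
the variables under the solutions of `E`. -/
def lenAbs (E : Equation A V) : Set (V → ℕ) :=
  {v | ∃ σ : V → List A, IsSolution σ E ∧ ∀ x : V, (σ x).length = v x}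

set_option linter.unusedSectionVars false
set_option linter.unnecessarySimpa false

-- image transfer
theorem aux_linear_image {M N : Type*} [AddCommMonoid M] [AddCommMonoid N]
    (f : M →+ N) {S : Set M} (h : IsLinearSet' S) : IsLinearSet' (f '' S) := by
  obtain ⟨b, m, P, rfl⟩ := h
  refine ⟨f b, m, fun i => f (P i), ?_⟩
  ext w
  constructor
  · rintro ⟨x, ⟨lam, rfl⟩, rfl⟩
    exact ⟨lam, by rw [map_add, map_sum]; simp [map_nsmul]⟩
  · rintro ⟨lam, rfl⟩
    exact ⟨b + ∑ i, lam i • P i, ⟨lam, rfl⟩, by rw [map_add, map_sum]; simp [map_nsmul]⟩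

theorem aux_semilinear_image {M N : Type*} [AddCommMonoid M] [AddCommMonoid N]
    (f : M →+ N) {S : Set M} (h : IsSemilinearSet' S) : IsSemilinearSet' (f '' S) := by
  obtain ⟨n, T, hlin, rfl⟩ := h
  exact ⟨n, fun i => f '' T i, fun i => aux_linear_image f (hlin i),
    by rw [Set.image_iUnion]⟩

variable [DecidableEq A] in
/-- The equation `x·ab·y = y·ab·x`. -/
def auxE (a b : A) : Equation A (Fin 2) :=
  ([Sum.inr 0, Sum.inl a, Sum.inl b, Sum.inr 1], [Sum.inr 1, Sum.inl a, Sum.inl b, Sum.inr 0])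

variable [DecidableEq A] in
theorem auxE_quadratic (a b : A) : Quadratic (auxE a b) := by
  intro x
  fin_cases x <;> simp [auxE, varCount, List.count, List.countP, List.countP.go,
    show ∀ (z : A) (y : Fin 2), ((Sum.inl z : A ⊕ Fin 2) == Sum.inr y) = false from fun _ _ => rfl,
    show ((Sum.inr 0 : A ⊕ Fin 2) == Sum.inr 0) = true from rfl,
    show ((Sum.inr 1 : A ⊕ Fin 2) == Sum.inr 0) = false from rfl,
    show ((Sum.inr 0 : A ⊕ Fin 2) == Sum.inr 1) = false from rfl,
    show ((Sum.inr 1 : A ⊕ Fin 2) == Sum.inr 1) = true from rfl]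

theorem auxE_sol (a b : A) (σ : Fin 2 → List A) :
    IsSolution σ (auxE a b) ↔ σ 0 ++ [a, b] ++ σ 1 = σ 1 ++ [a, b] ++ σ 0 := by
  simp [IsSolution, auxE, applySub]

/-- the projection hom -/
def auxF : ((Fin 2) → ℕ) →+ ℕ × ℕ where
  toFun w := (w 0, w 1)
  map_zero' := rfl
  map_add' _ _ := rfl

theorem auxF_image (a b : A) :
    auxF '' lenAbs (auxE a b) = {p : ℕ × ℕ | ∃ u v : List A,
      u.length = p.1 ∧ v.length = p.2 ∧ u ++ [a, b] ++ v = v ++ [a, b] ++ u} := by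
  ext ⟨mm, nn⟩
  constructor
  · rintro ⟨w, ⟨σ, hsol, hlen⟩, hfw⟩
    have h0 : w 0 = mm := congrArg Prod.fst hfw
    have h1 : w 1 = nn := congrArg Prod.snd hfw
    exact ⟨σ 0, σ 1, by rw [hlen 0, h0], by rw [hlen 1, h1],
      (auxE_sol a b σ).mp hsol⟩
  · rintro ⟨u, v, hu, hv, heq⟩
    refine ⟨![mm, nn], ⟨![u, v], (auxE_sol a b _).mpr ?_, ?_⟩, rfl⟩
    · simpa using heq
    · intro x
      fin_cases x <;> simpa [hu, hv]

/-- For distinct letters `a, b`, the set of pairs of lengths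
`(|u|, |v|)` of words satisfying `u·ab·v = v·ab·u` is not semilinear (hence
not Presburger-definable).  Consequently, there is a quadratic word equation
(namely `x·ab·y = y·ab·x`) whose length abstraction is not
Presburger-definable. -/
theorem lenAbs_xaby_eq_yabx_not_semilinear
    {A : Type*} [DecidableEq A] (a b : A) (hab : a ≠ b) :
    ¬ IsSemilinearSet' {p : ℕ × ℕ | ∃ u v : List A,
        u.length = p.1 ∧ v.length = p.2 ∧
          u ++ [a, b] ++ v = v ++ [a, b] ++ u} ∧
    ∃ E : Equation A (Fin 2), Quadratic E ∧ ¬ IsSemilinearSet' (lenAbs E) := by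
  have hWset : {p : ℕ × ℕ | ∃ u v : List A,
        u.length = p.1 ∧ v.length = p.2 ∧
          u ++ [a, b] ++ v = v ++ [a, b] ++ u}
      = {x : ℕ × ℕ | ∃ g, 2 ≤ g ∧ g ∣ x.1 + 2 ∧ g ∣ x.2 + 2} := by
    ext x
    constructor
    · rintro ⟨u, v, hu, hv, heq⟩
      obtain ⟨g, hg, h1, h2⟩ := WPf.key_dvd hab heq
      exact ⟨g, hg, hu ▸ h1, hv ▸ h2⟩
    · rintro ⟨g, hg, h1, h2⟩
      obtain ⟨u, v, hu, hv, heq⟩ := WPf.key_construct a b hg h1 h2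
      exact ⟨u, v, hu, hv, heq⟩
  have hnot : ¬ IsSemilinearSet' {p : ℕ × ℕ | ∃ u v : List A,
      u.length = p.1 ∧ v.length = p.2 ∧
        u ++ [a, b] ++ v = v ++ [a, b] ++ u} := by
    rw [hWset]
    exact WPf.not_semilinear_T
  refine ⟨hnot, auxE a b, auxE_quadratic a b, ?_⟩
  intro hsl
  exact hnot (auxF_image a b ▸ aux_semilinear_image auxF hsl)


end WordEq
end

section
/- Let A be an alphabet containing two distinct letters a and b. For all natural numbers m, n: there exist words u, v ∈ A* with |u| = m, |v| = n and u·ab·v = v·ab·u if and only if m = n, or (m = 0 and n is even), or (n = 0 and m is even), or (m > 0 and n > 0 and gcd(m + 2, n + 2) > 1). -/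
namespace LenAbsAux

variable {A : Type*}

/-- `pw t k` is the word `t` repeated `k` times. -/
def pw (t : List A) : ℕ → List A
  | 0 => []
  | k + 1 => t ++ pw t k

@[simp] lemma pw_zero (t : List A) : pw t 0 = [] := rfl
@[simp] lemma pw_succ (t : List A) (k : ℕ) : pw t (k+1) = t ++ pw t k := rfl

lemma pw_length (t : List A) (k : ℕ) : (pw t k).length = k * t.length := by
  induction k with
  | zero => simp
  | succ k ih => simp [ih, Nat.succ_mul]; ring

lemma pw_add (t : List A) (k l : ℕ) : pw t (k + l) = pw t k ++ pw t l := by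
  induction k with
  | zero => simp
  | succ k ih =>
    have : k + 1 + l = (k + l) + 1 := by omega
    rw [this, pw_succ, ih, pw_succ, List.append_assoc]

lemma pw_succ' (t : List A) (k : ℕ) : pw t (k+1) = pw t k ++ t := by
  rw [pw_add, pw_succ, pw_zero, List.append_nil]

lemma mem_of_mem_pw {t : List A} {k : ℕ} {x : A} (h : x ∈ pw t k) : x ∈ t := by
  induction k with
  | zero => simp at h
  | succ k ih =>
    rw [pw_succ, List.mem_append] at h
    exact h.elim id ih

/-- Commuting words are powers of a common word. -/
lemma comm_pw : ∀ (N : ℕ) (x y : List A), x.length + y.length ≤ N →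
    x ++ y = y ++ x → ∃ (t : List A) (k l : ℕ), x = pw t k ∧ y = pw t l := by
  intro N
  induction N with
  | zero =>
    intro x y hlen _
    have hx : x = [] := by
      have := List.length_eq_zero_iff.mp (by omega : x.length = 0); exact this
    have hy : y = [] := by
      have := List.length_eq_zero_iff.mp (by omega : y.length = 0); exact this
    exact ⟨[], 0, 0, by simp [hx], by simp [hy]⟩
  | succ N ih =>
    intro x y hlen h
    rcases le_total x.length y.length with hle | hle
    · rcases eq_or_ne x [] with rfl | hx0
      · exact ⟨y, 0, 1, rfl, by simp⟩
      · have h1 : x <+: y ++ x := h ▸ List.prefix_append x y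
        have hx : x <+: y :=
          List.prefix_of_prefix_length_le h1 (List.prefix_append y x) hle
        obtain ⟨z, rfl⟩ := hx
        have h' : x ++ z = z ++ x := by
          exact List.append_cancel_left (show x ++ (x ++ z) = x ++ (z ++ x) by
            rw [h, List.append_assoc])
        have hxpos : 0 < x.length := List.length_pos_iff.mpr hx0
        have hlen' : x.length + z.length ≤ N := by
          simp only [List.length_append] at hlen; omega
        obtain ⟨t, k, l, hxe, hze⟩ := ih x z hlen' h'
        exact ⟨t, k, k + l, hxe, by rw [pw_add, hxe, hze]⟩
    · rcases eq_or_ne y [] with rfl | hy0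
      · exact ⟨x, 1, 0, by simp, rfl⟩
      · have h1 : y <+: x ++ y := h.symm ▸ List.prefix_append y x
        have hy : y <+: x :=
          List.prefix_of_prefix_length_le h1 (List.prefix_append x y) hle
        obtain ⟨z, rfl⟩ := hy
        have h' : y ++ z = z ++ y := by
          exact List.append_cancel_left (show y ++ (y ++ z) = y ++ (z ++ y) by
            rw [← h, List.append_assoc])
        have hypos : 0 < y.length := List.length_pos_iff.mpr hy0
        have hlen' : y.length + z.length ≤ N := by
          simp only [List.length_append] at hlen; omega
        obtain ⟨t, k, l, hye, hze⟩ := ih y z hlen' h'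
        exact ⟨t, k + l, k, by rw [pw_add, hye, hze], hye⟩

end LenAbsAux

open LenAbsAux

/-- Over an alphabet containing two distinct letters `a` and
`b`, there exist words `u, v` with `|u| = m`, `|v| = n` and
`u·ab·v = v·ab·u` iff `m = n`, or `m = 0` and `n` even, or `n = 0` and `m`
even, or `m, n > 0` and `gcd (m+2) (n+2) > 1`. -/
theorem lenAbs_xaby_eq_yabx {A : Type*} (a b : A) (hab : a ≠ b) (m n : ℕ) :
    (∃ u v : List A,
        u.length = m ∧ v.length = n ∧
          u ++ [a, b] ++ v = v ++ [a, b] ++ u) ↔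
      (m = n ∨ (m = 0 ∧ Even n) ∨ (n = 0 ∧ Even m) ∨
        (0 < m ∧ 0 < n ∧ 1 < Nat.gcd (m + 2) (n + 2))) := by
  constructor
  · rintro ⟨u, v, hu, hv, h⟩
    have hUV : (u ++ [a, b]) ++ (v ++ [a, b]) = (v ++ [a, b]) ++ (u ++ [a, b]) := by
      calc (u ++ [a, b]) ++ (v ++ [a, b]) = (u ++ [a, b] ++ v) ++ [a, b] := by
            simp [List.append_assoc]
        _ = (v ++ [a, b] ++ u) ++ [a, b] := by rw [h]
        _ = (v ++ [a, b]) ++ (u ++ [a, b]) := by simp [List.append_assoc]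
    obtain ⟨t, k, l, hU, hV⟩ := comm_pw ((u ++ [a, b]).length + (v ++ [a, b]).length)
      (u ++ [a, b]) (v ++ [a, b]) le_rfl hUV
    have hm : m + 2 = k * t.length := by
      have := congrArg List.length hU
      simp [pw_length, hu] at this
      omega
    have hn : n + 2 = l * t.length := by
      have := congrArg List.length hV
      simp [pw_length, hv] at this
      omega
    have hk1 : 1 ≤ k := by
      rcases Nat.eq_zero_or_pos k with rfl | h; · simp at hm
      · exact h
    have hl1 : 1 ≤ l := by
      rcases Nat.eq_zero_or_pos l with rfl | h; · simp at hn
      · exact h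
    have ht1 : 1 ≤ t.length := by
      rcases Nat.eq_zero_or_pos t.length with h0 | h; · rw [h0] at hm; omega
      · exact h
    have ht2 : 2 ≤ t.length := by
      rcases Nat.lt_or_ge t.length 2 with hlt | hge
      · exfalso
        have hte : t.length = 1 := by omega
        obtain ⟨c, rfl⟩ := List.length_eq_one_iff.mp hte
        have ha : a ∈ pw [c] k := by rw [← hU]; simp
        have hb : b ∈ pw [c] k := by rw [← hU]; simp
        have ha' : a = c := by simpa using mem_of_mem_pw ha
        have hb' : b = c := by simpa using mem_of_mem_pw hb
        exact hab (ha'.trans hb'.symm)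
      · exact hge
    rcases Nat.eq_zero_or_pos m with rfl | hmpos
    · -- m = 0
      right; left
      refine ⟨rfl, ?_⟩
      have hkt : k * t.length = 2 := by omega
      have htle : t.length ≤ 2 := by
        have : t.length ≤ k * t.length := Nat.le_mul_of_pos_left _ hk1
        omega
      have hteq : t.length = 2 := le_antisymm htle ht2
      rw [hteq] at hn
      rw [Nat.even_iff]; omega
    rcases Nat.eq_zero_or_pos n with rfl | hnpos
    · right; right; left
      refine ⟨rfl, ?_⟩
      have hlt : l * t.length = 2 := by omega
      have htle : t.length ≤ 2 := by
        have : t.length ≤ l * t.length := Nat.le_mul_of_pos_left _ hl1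
        omega
      have hteq : t.length = 2 := le_antisymm htle ht2
      rw [hteq] at hm
      rw [Nat.even_iff]; omega
    · right; right; right
      refine ⟨hmpos, hnpos, ?_⟩
      have hd1 : t.length ∣ m + 2 := ⟨k, by rw [hm, Nat.mul_comm]⟩
      have hd2 : t.length ∣ n + 2 := ⟨l, by rw [hn, Nat.mul_comm]⟩
      have hdg : t.length ∣ Nat.gcd (m + 2) (n + 2) := Nat.dvd_gcd hd1 hd2
      have : t.length ≤ Nat.gcd (m + 2) (n + 2) :=
        Nat.le_of_dvd (Nat.gcd_pos_of_pos_left _ (by omega)) hdg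
      omega
  · rintro (rfl | ⟨rfl, k, hk⟩ | ⟨rfl, k, hk⟩ | ⟨hm, hn, hg⟩)
    · exact ⟨List.replicate m a, List.replicate m a, by simp, by simp, rfl⟩
    · -- m = 0, n = k + k
      refine ⟨[], pw [a, b] k, by simp, ?_, ?_⟩
      · simp [pw_length]; omega
      · simp only [List.nil_append, List.append_nil]
        have : [a, b] ++ pw [a, b] k = pw [a, b] (k + 1) := (pw_succ _ _).symm
        rw [this, pw_succ']
    · refine ⟨pw [a, b] k, [], ?_, by simp, ?_⟩
      · simp [pw_length]; omega
      · simp only [List.nil_append, List.append_nil]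
        have : [a, b] ++ pw [a, b] k = pw [a, b] (k + 1) := (pw_succ _ _).symm
        rw [this, pw_succ']
    · obtain ⟨p, hp⟩ := Nat.gcd_dvd_left (m + 2) (n + 2)
      obtain ⟨q, hq⟩ := Nat.gcd_dvd_right (m + 2) (n + 2)
      generalize hD : Nat.gcd (m + 2) (n + 2) = d at hp hq hg
      obtain ⟨d', rfl⟩ : ∃ d', d = d' + 2 := ⟨d - 2, by omega⟩
      have hp0 : p ≠ 0 := by rintro rfl; simp at hp
      have hq0 : q ≠ 0 := by rintro rfl; simp at hq
      obtain ⟨p', rfl⟩ : ∃ p', p = p' + 1 := ⟨p - 1, by omega⟩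
      obtain ⟨q', rfl⟩ : ∃ q', q = q' + 1 := ⟨q - 1, by omega⟩
      set t : List A := List.replicate d' a ++ [a, b] with ht
      have htlen : t.length = d' + 2 := by simp [ht]
      refine ⟨pw t p' ++ List.replicate d' a, pw t q' ++ List.replicate d' a, ?_, ?_, ?_⟩
      · rw [List.length_append, pw_length, List.length_replicate, htlen]
        have key2 : p' * (d' + 2) + (d' + 2) = m + 2 := by rw [hp]; ring
        generalize p' * (d' + 2) = X at key2 ⊢
        omega
      · rw [List.length_append, pw_length, List.length_replicate, htlen]
        have key2 : q' * (d' + 2) + (d' + 2) = n + 2 := by rw [hq]; ring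
        generalize q' * (d' + 2) = X at key2 ⊢
        omega
      · have key : ∀ r s : ℕ, (pw t r ++ List.replicate d' a) ++ [a, b] ++
            (pw t s ++ List.replicate d' a) = pw t (r + s + 1) ++ List.replicate d' a := by
          intro r s
          have h1 : List.replicate d' a ++ [a, b] = t := rfl
          calc (pw t r ++ List.replicate d' a) ++ [a, b] ++ (pw t s ++ List.replicate d' a)
              = pw t r ++ (List.replicate d' a ++ [a, b]) ++ (pw t s ++ List.replicate d' a) := by
                simp [List.append_assoc]
            _ = (pw t r ++ t ++ pw t s) ++ List.replicate d' a := by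
                rw [h1]; simp [List.append_assoc]
            _ = pw t (r + s + 1) ++ List.replicate d' a := by
                rw [show r + s + 1 = (r + 1) + s from by omega, pw_add, pw_succ', List.append_assoc]
        rw [key, key, Nat.add_comm p' q']
end

section
/- Let a and b be distinct letters of an alphabet A, and let d > 1 with d dividing m + 2 and d dividing n + 2, where m > 0 and n > 0. Then the words u = (a^{d−1}b)^{(m+2)/d − 1}·a^{d−2} and v = (a^{d−1}b)^{(n+2)/d − 1}·a^{d−2} satisfy |u| = m, |v| = n, and u·ab·v = v·ab·u. -/
private lemma len_aux {A : Type*} (a b : A) (d k : ℕ) (hd : 1 < d) (hk : 0 < k) :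
    (((List.replicate (k - 1) (List.replicate (d - 1) a ++ [b])).flatten
        ++ List.replicate (d - 2) a).length = k * d - 2) := by
  simp [List.length_flatten, List.map_replicate, List.sum_replicate, smul_eq_mul]
  have h1 : d - 1 + 1 = d := by omega
  rw [h1, Nat.sub_one_mul]
  have ht : d ≤ k * d := Nat.le_mul_of_pos_left d hk
  omega

private lemma flat_aux {A : Type*} (a b : A) (d k : ℕ) (hd : 1 < d) (hk : 0 < k) :
    ((List.replicate (k - 1) (List.replicate (d - 1) a ++ [b])).flatten
        ++ List.replicate (d - 2) a) ++ [a, b]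
      = (List.replicate k (List.replicate (d - 1) a ++ [b])).flatten := by
  have h1 : List.replicate (d - 2) a ++ [a, b]
      = (List.replicate (d - 1) a ++ [b]) := by
    have : [a, b] = [a] ++ [b] := rfl
    rw [this, ← List.append_assoc, ← List.replicate_succ']
    congr 2
    omega
  have h2 : k = (k - 1) + 1 := by omega
  rw [List.append_assoc, h1, h2, List.replicate_succ', List.flatten_append]
  simp

private lemma comb_aux {A : Type*} (a b : A) (d k l : ℕ) (hd : 1 < d) (hk : 0 < k) (hl : 0 < l) :
    (((List.replicate (k - 1) (List.replicate (d - 1) a ++ [b])).flatten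
        ++ List.replicate (d - 2) a) ++ [a, b] ++
     ((List.replicate (l - 1) (List.replicate (d - 1) a ++ [b])).flatten
        ++ List.replicate (d - 2) a))
      = (List.replicate (k + l - 1) (List.replicate (d - 1) a ++ [b])).flatten
        ++ List.replicate (d - 2) a := by
  rw [flat_aux a b d k hd hk, ← List.append_assoc, ← List.flatten_append,
    ← List.replicate_add]
  have h3 : k + (l - 1) = k + l - 1 := by omega
  rw [h3]

/-- For distinct letters `a, b`, if `d > 1` divides `m + 2`
and `n + 2` with `m, n > 0`, then the words
`u = (a^{d-1}b)^{(m+2)/d - 1}·a^{d-2}` and `v = (a^{d-1}b)^{(n+2)/d - 1}·a^{d-2}`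
satisfy `|u| = m`, `|v| = n` and `u·ab·v = v·ab·u`. -/
theorem gcd_witness_xaby_eq_yabx {A : Type*} (a b : A) (hab : a ≠ b)
    (d m n : ℕ) (hd : 1 < d) (hm : 0 < m) (hn : 0 < n)
    (hdm : d ∣ m + 2) (hdn : d ∣ n + 2) :
    (((List.replicate ((m + 2) / d - 1) (List.replicate (d - 1) a ++ [b])).flatten
        ++ List.replicate (d - 2) a).length = m) ∧
    (((List.replicate ((n + 2) / d - 1) (List.replicate (d - 1) a ++ [b])).flatten
        ++ List.replicate (d - 2) a).length = n) ∧
    (((List.replicate ((m + 2) / d - 1) (List.replicate (d - 1) a ++ [b])).flatten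
        ++ List.replicate (d - 2) a)
      ++ [a, b] ++
      ((List.replicate ((n + 2) / d - 1) (List.replicate (d - 1) a ++ [b])).flatten
        ++ List.replicate (d - 2) a)
      =
      ((List.replicate ((n + 2) / d - 1) (List.replicate (d - 1) a ++ [b])).flatten
        ++ List.replicate (d - 2) a)
      ++ [a, b] ++
      ((List.replicate ((m + 2) / d - 1) (List.replicate (d - 1) a ++ [b])).flatten
        ++ List.replicate (d - 2) a)) := by
  have hkm : ((m + 2) / d) * d = m + 2 := Nat.div_mul_cancel hdm
  have hkn : ((n + 2) / d) * d = n + 2 := Nat.div_mul_cancel hdn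
  have hk : 0 < (m + 2) / d := Nat.div_pos (Nat.le_of_dvd (by omega) hdm) (by omega)
  have hl : 0 < (n + 2) / d := Nat.div_pos (Nat.le_of_dvd (by omega) hdn) (by omega)
  refine ⟨?_, ?_, ?_⟩
  · rw [len_aux a b d _ hd hk]; omega
  · rw [len_aux a b d _ hd hl]; omega
  · rw [comb_aux a b d _ _ hd hk hl, comb_aux a b d _ _ hd hl hk, Nat.add_comm]
end

section
/- Let a and b be distinct letters of an alphabet A, and let u, v ∈ A* satisfy u·ab·v = v·ab·u with |u| > |v| > 0. Then |u| ≠ |v| + 1, hence |u| ≥ |v| + 2; moreover, writing u = p·u' with |p| = |v| + 2, the suffix u' satisfies u'·ab·v = v·ab·u', and gcd(|u'| + 2, |v| + 2) = gcd(|u| + 2, |v| + 2). -/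
/-- (Descent step.) For distinct letters `a, b`, if
`u·ab·v = v·ab·u` with `|u| > |v| > 0`, then `|u| ≠ |v| + 1`, hence
`|u| ≥ |v| + 2`; moreover, writing `u = p·u'` with `|p| = |v| + 2`, one has
`u'·ab·v = v·ab·u'` and `gcd (|u'|+2) (|v|+2) = gcd (|u|+2) (|v|+2)`. -/
theorem descent_xaby_eq_yabx {A : Type*} (a b : A) (hab : a ≠ b)
    (u v : List A) (heq : u ++ [a, b] ++ v = v ++ [a, b] ++ u)
    (h1 : v.length < u.length) (h2 : 0 < v.length) :
    u.length ≠ v.length + 1 ∧ v.length + 2 ≤ u.length ∧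
      ∀ p u' : List A, u = p ++ u' → p.length = v.length + 2 →
        (u' ++ [a, b] ++ v = v ++ [a, b] ++ u' ∧
          Nat.gcd (u'.length + 2) (v.length + 2)
            = Nat.gcd (u.length + 2) (v.length + 2)) := by
  -- `v ++ [a,b]` is a prefix of the common word
  have hvab : (v ++ [a, b]) <+: u ++ [a, b] ++ v := by
    rw [heq]
    exact ⟨u, by simp⟩
  have hne : u.length ≠ v.length + 1 := by
    intro hlen
    have hua : (u ++ [a]) <+: u ++ [a, b] ++ v :=
      ⟨[b] ++ v, by simp⟩
    have hpp : u ++ [a] = v ++ [a, b] := by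
      have h := List.prefix_of_prefix_length_le hua hvab (by simp [hlen])
      exact h.eq_of_length (by simp [hlen])
    have : u = v ++ [a] ∧ [a] = [b] := by
      apply List.append_inj
      · simpa using hpp
      · simp only [List.length_append, List.length_cons, List.length_nil]; omega
    exact hab (by simpa using this.2)
  have hle : v.length + 2 ≤ u.length := by omega
  refine ⟨hne, hle, ?_⟩
  intro p u' hu hp
  have hpfx : p <+: u ++ [a, b] ++ v := ⟨u' ++ [a, b] ++ v, by simp [hu]⟩
  have hpe : p = v ++ [a, b] := by
    have h := List.prefix_of_prefix_length_le hpfx hvab (by simp [hp])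
    exact h.eq_of_length (by simp [hp])
  have hu2 : u = v ++ [a, b] ++ u' := by rw [hu, hpe]
  have heq' : u' ++ [a, b] ++ v = v ++ [a, b] ++ u' := by
    rw [hu2] at heq
    simp only [List.append_assoc] at heq ⊢
    exact List.append_cancel_left (List.append_cancel_left heq)
  refine ⟨heq', ?_⟩
  have hlen : u'.length + 2 = (u.length + 2) - (v.length + 2) := by
    have := congrArg List.length hu2
    simp at this
    omega
  rw [hlen]
  exact Nat.gcd_sub_self_left (by omega)
end

section
/- If E is a regular-oriented word equation and E ⇒ E' is a step of the Nielsen transformation, then E' is also regular-oriented. -/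
namespace WordEq

variable {A V : Type*}

/-- A word equation is regular if each variable occurs at most once on each
side. -/
def Regular [DecidableEq A] [DecidableEq V] (E : Equation A V) : Prop :=
  ∀ x : V, E.1.count (Sum.inr x) ≤ 1 ∧ E.2.count (Sum.inr x) ≤ 1

/-- On the word `w`, the variables occur in `lt`-increasing order. -/
def SideOrdered (lt : V → V → Prop) (w : Word A V) : Prop :=
  ∀ (w₁ w₂ w₃ : Word A V) (α β : V),
    w = w₁ ++ Sum.inr α :: w₂ ++ Sum.inr β :: w₃ → lt α β

/-- A word equation is oriented if there is a strict total order on the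
variables such that on each side the variables occur in increasing order. -/
def Oriented (E : Equation A V) : Prop :=
  ∃ lt : V → V → Prop,
    IsStrictTotalOrder V lt ∧ SideOrdered lt E.1 ∧ SideOrdered lt E.2

/-- A regular-oriented word equation. -/
def RegularOriented [DecidableEq A] [DecidableEq V] (E : Equation A V) : Prop :=
  Regular E ∧ Oriented E

/-! ### Auxiliary machinery -/

/-- The sequence of variables occurring in a word. -/
def vars (w : Word A V) : List V :=
  w.flatMap fun s => Sum.elim (fun _ => []) (fun y => [y]) s

@[simp] lemma vars_nil : vars ([] : Word A V) = [] := rfl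

@[simp] lemma vars_cons_inl (a : A) (w : Word A V) :
    vars (Sum.inl a :: w) = vars w := rfl

@[simp] lemma vars_cons_inr (x : V) (w : Word A V) :
    vars (Sum.inr x :: w) = x :: vars w := rfl

@[simp] lemma vars_append (w₁ w₂ : Word A V) :
    vars (w₁ ++ w₂) = vars w₁ ++ vars w₂ := List.flatMap_append ..

lemma count_vars [DecidableEq A] [DecidableEq V] (w : Word A V) (z : V) :
    (vars w).count z = w.count (Sum.inr z) := by
  induction w with
  | nil => rfl
  | cons s w ih =>
    cases s with
    | inl a => simpa [List.count_cons, show ((Sum.inl a : A ⊕ V) == Sum.inr z) = false from rfl] using ih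
    | inr y =>
      rw [vars_cons_inr, List.count_cons, List.count_cons, ih,
        show ((Sum.inr y : A ⊕ V) == Sum.inr z) = (y == z) from rfl]

/-- The induced substitution on variable sequences. -/
def substV [DecidableEq V] (x : V) (r : List V) (l : List V) : List V :=
  l.flatMap fun y => if y = x then r else [y]

@[simp] lemma substV_nil [DecidableEq V] (x : V) (r : List V) :
    substV x r [] = [] := rfl

lemma substV_cons [DecidableEq V] (x : V) (r : List V) (y : V) (l : List V) :
    substV x r (y :: l) = (if y = x then r else [y]) ++ substV x r l := rfl

lemma vars_substVar [DecidableEq V] (x : V) (r : Word A V) (w : Word A V) :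
    vars (substVar x r w) = substV x (vars r) (vars w) := by
  induction w with
  | nil => rfl
  | cons s w ih =>
    cases s with
    | inl a =>
      show vars ([Sum.inl a] ++ substVar x r w) = _
      simpa using ih
    | inr y =>
      show vars ((if y = x then r else [Sum.inr y]) ++ substVar x r w) = _
      rw [vars_append, ih, vars_cons_inr, substV_cons]
      by_cases h : y = x <;> simp [h]

lemma substV_nil_sublist [DecidableEq V] (x : V) (l : List V) :
    List.Sublist (substV x [] l) l := by
  induction l with
  | nil => simp
  | cons y l ih =>
    rw [substV_cons]
    by_cases h : y = x
    · simpa [h] using ih.trans (List.sublist_cons_self _ _)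
    · simpa [h] using ih.cons₂ y

lemma substV_of_not_mem [DecidableEq V] {x : V} {l : List V} (r : List V)
    (h : x ∉ l) : substV x r l = l := by
  induction l with
  | nil => rfl
  | cons y l ih =>
    simp only [List.mem_cons, not_or] at h
    rw [substV_cons, if_neg (fun hy => h.1 hy.symm), ih h.2]
    rfl

lemma substV_self [DecidableEq V] (x : V) (l : List V) :
    substV x [x] l = l := by
  induction l with
  | nil => rfl
  | cons y l ih =>
    rw [substV_cons, ih]
    by_cases h : y = x <;> simp [h]

lemma count_substV_pair [DecidableEq V] {x z : V} (y : V) (hzx : z ≠ x)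
    (l : List V) : (substV y [x, y] l).count z = l.count z := by
  induction l with
  | nil => rfl
  | cons c l ih =>
    rw [substV_cons]
    by_cases h : c = y <;>
      simp [h, List.count_cons, List.count_append, ih, hzx, Ne.symm hzx]

lemma count_substV_pair_self [DecidableEq V] {x y : V} (hxy : x ≠ y)
    (l : List V) :
    (substV y [x, y] l).count x = l.count x + l.count y := by
  induction l with
  | nil => rfl
  | cons c l ih =>
    rw [substV_cons]
    by_cases h : c = y
    · simp [h, List.count_cons, ih, hxy, Ne.symm hxy]
      omega
    · simp [h, List.count_cons, ih]
      by_cases h2 : c = x <;> simp [h2] <;> omega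

lemma mem_substV_pair [DecidableEq V] {x y b : V} {l : List V}
    (h : b ∈ substV y [x, y] l) : b ∈ l ∨ (b = x ∧ y ∈ l) := by
  rw [substV, List.mem_flatMap] at h
  obtain ⟨c, hc, hbc⟩ := h
  by_cases hcy : c = y
  · subst hcy
    rw [if_pos rfl] at hbc
    simp only [List.mem_cons, List.not_mem_nil, or_false, List.mem_singleton] at hbc
    rcases hbc with hbc | hbc
    · exact Or.inr ⟨hbc, hc⟩
    · subst hbc; exact Or.inl hc
  · rw [if_neg hcy] at hbc
    simp at hbc; subst hbc; exact Or.inl hc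

/-- The order obtained from `lt` by moving `x` to sit immediately below `y`. -/
def moveLT [DecidableEq V] (lt : V → V → Prop) (x y : V) (a b : V) : Prop :=
  lt (if a = x then y else a) (if b = x then y else b) ∨ (a = x ∧ b = y)

lemma moveLT_sto [DecidableEq V] {lt : V → V → Prop}
    (h : IsStrictTotalOrder V lt) {x y : V} (hxy : x ≠ y) :
    IsStrictTotalOrder V (moveLT lt x y) := by
  refine { trichotomous := ?_, irrefl := ?_, trans := ?_ }
  · -- trichotomous
    intro a b
    suffices H : moveLT lt x y a b ∨ a = b ∨ moveLT lt x y b a from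
      fun h1 h2 => (H.resolve_left h1).resolve_right h2
    by_cases hab : a = b
    · exact Or.inr (Or.inl hab)
    have ht : lt (if a = x then y else a) (if b = x then y else b) ∨
        (if a = x then y else a) = (if b = x then y else b) ∨
        lt (if b = x then y else b) (if a = x then y else a) :=
      or_iff_not_imp_left.mpr fun h1 => or_iff_not_imp_right.mpr fun h2 =>
        h.trichotomous _ _ h1 h2
    rcases ht
      with hlt | heq | hlt
    · exact Or.inl (Or.inl hlt)
    · -- the images coincide; then {a,b} = {x,y}
      by_cases ha : a = x <;> by_cases hb : b = x <;>
        simp [ha, hb] at heq <;> first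
        | exact absurd (ha.trans hb.symm) hab
        | (subst ha; exact Or.inl (Or.inr ⟨rfl, heq.symm⟩))
        | (subst hb; exact Or.inr (Or.inr (Or.inr ⟨rfl, heq⟩)))
        | exact absurd heq hab
    · exact Or.inr (Or.inr (Or.inl hlt))
  · -- irrefl
    intro a ha
    rcases ha with ha | ⟨h1, h2⟩
    · exact h.irrefl _ ha
    · exact hxy (h1 ▸ h2)
  · -- trans
    intro a b c hab hbc
    rcases hab with hab | ⟨ha, hb⟩ <;> rcases hbc with hbc | ⟨hb', hc⟩
    · exact Or.inl (h.trans _ _ _ hab hbc)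
    · subst hb'; subst hc
      refine Or.inl ?_
      simpa [if_neg hxy] using hab
    · subst ha; subst hb
      refine Or.inl ?_
      simpa [if_neg hxy, if_pos rfl] using hbc
    · exact absurd (hb'.symm.trans hb) hxy

lemma pairwise_moveLT_of_not_mem [DecidableEq V] {lt : V → V → Prop}
    {x y : V} {l : List V} (hx : x ∉ l) (hp : l.Pairwise lt) :
    l.Pairwise (moveLT lt x y) := by
  refine hp.imp_of_mem ?_
  intro a b ha hb hab
  have hax : a ≠ x := fun h => hx (h ▸ ha)
  have hbx : b ≠ x := fun h => hx (h ▸ hb)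
  exact Or.inl (by simpa [hax, hbx] using hab)

lemma pairwise_substV_move [DecidableEq V] {lt : V → V → Prop}
    (hirr : ∀ a, ¬ lt a a) {x y : V} (hxy : x ≠ y) {l : List V}
    (hp : l.Pairwise lt) (hx : x ∉ l) :
    (substV y [x, y] l).Pairwise (moveLT lt x y) := by
  induction l with
  | nil => simp
  | cons z l ih =>
    rw [List.pairwise_cons] at hp
    simp only [List.mem_cons, not_or] at hx
    rw [substV_cons]
    by_cases hzy : z = y
    · subst hzy
      have hznl : z ∉ l := fun hm => hirr z (hp.1 z hm)
      rw [if_pos rfl, substV_of_not_mem _ hznl]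
      refine List.Pairwise.cons ?_ (List.Pairwise.cons ?_ ?_)
      · intro b hb
        rcases List.mem_cons.mp hb with rfl | hb
        · exact Or.inr ⟨rfl, rfl⟩
        · have hbx : b ≠ x := fun h => hx.2 (h ▸ hb)
          exact Or.inl (by simpa [hbx, Ne.symm hx.1] using hp.1 b hb)
      · intro b hb
        have hbx : b ≠ x := fun h => hx.2 (h ▸ hb)
        exact Or.inl (by simpa [hbx, Ne.symm hx.1] using hp.1 b hb)
      · exact pairwise_moveLT_of_not_mem hx.2 hp.2
    · rw [if_neg hzy]
      refine List.Pairwise.cons ?_ (ih hp.2 hx.2)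
      intro b hb
      have hzx : z ≠ x := Ne.symm hx.1
      rcases mem_substV_pair hb with hbl | ⟨rfl, hyl⟩
      · have hbx : b ≠ x := fun h => hx.2 (h ▸ hbl)
        exact Or.inl (by simpa [hzx, hbx] using hp.1 b hbl)
      · exact Or.inl (by simpa [hzx] using hp.1 y hyl)

lemma SideOrdered.tail {lt : V → V → Prop} {s : A ⊕ V} {w : Word A V}
    (h : SideOrdered lt (s :: w)) : SideOrdered lt w :=
  fun w₁ w₂ w₃ α β hw => h (s :: w₁) w₂ w₃ α β (by simp [hw])

lemma vars_decomp {w : Word A V} {l₁ : List V} {a : V} {l₂ : List V}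
    (h : vars w = l₁ ++ a :: l₂) :
    ∃ w₁ w₂, w = w₁ ++ Sum.inr a :: w₂ ∧ vars w₁ = l₁ ∧ vars w₂ = l₂ := by
  induction w generalizing l₁ with
  | nil => exact absurd h (by simp)
  | cons s w ih =>
    cases s with
    | inl c =>
      rw [vars_cons_inl] at h
      obtain ⟨w₁, w₂, rfl, h1, h2⟩ := ih h
      exact ⟨Sum.inl c :: w₁, w₂, rfl, h1, h2⟩
    | inr b =>
      rw [vars_cons_inr] at h
      cases l₁ with
      | nil =>
        simp only [List.nil_append, List.cons.injEq] at h
        obtain ⟨rfl, rfl⟩ := h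
        exact ⟨[], w, rfl, rfl, rfl⟩
      | cons c l₁ =>
        simp only [List.cons_append, List.cons.injEq] at h
        obtain ⟨rfl, h⟩ := h
        obtain ⟨w₁, w₂, rfl, h1, h2⟩ := ih h
        exact ⟨Sum.inr b :: w₁, w₂, rfl, by simp [h1], h2⟩

lemma sideOrdered_iff_pairwise {lt : V → V → Prop} {w : Word A V} :
    SideOrdered lt w ↔ (vars w).Pairwise lt := by
  constructor
  · intro h
    induction w with
    | nil => simp
    | cons s w ih =>
      cases s with
      | inl a => simpa using ih h.tail
      | inr a =>
        rw [vars_cons_inr, List.pairwise_cons]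
        refine ⟨fun b hb => ?_, ih h.tail⟩
        obtain ⟨l₁, l₂, hl⟩ := List.append_of_mem hb
        obtain ⟨w₁, w₂, rfl, -, -⟩ := vars_decomp hl
        exact h [] w₁ w₂ a b rfl
  · intro h w₁ w₂ w₃ α β hw
    subst hw
    have hs : List.Sublist [α, β] (vars (w₁ ++ Sum.inr α :: w₂ ++ Sum.inr β :: w₃)) := by
      have h3 : List.Sublist [β] (vars w₂ ++ β :: vars w₃) :=
        (((List.nil_sublist _).cons₂ β)).trans (List.sublist_append_right _ _)
      have h2 : List.Sublist [α, β] (α :: (vars w₂ ++ β :: vars w₃)) := h3.cons₂ α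
      simpa using h2.trans (List.sublist_append_right (vars w₁) _)
    exact List.pairwise_iff_forall_sublist.mp h hs

lemma not_mem_vars_of_count [DecidableEq A] [DecidableEq V] {x : V}
    {w : Word A V} (h : (Sum.inr x :: w).count (Sum.inr x) ≤ 1) :
    x ∉ vars w := by
  intro hm
  have h' : (x :: vars w).count x ≤ 1 := by
    rw [← vars_cons_inr x w, count_vars]; exact h
  rw [List.count_cons_self] at h'
  have h2 := List.count_pos_iff.mpr hm
  omega

/-- A Nielsen transformation step preserves
regular-orientedness. -/
theorem nielsen_preserves_regularOriented
    [Finite A] [Finite V] [DecidableEq A] [DecidableEq V]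
    {E E' : Equation A V} (hro : RegularOriented E) (h : Nielsen E E') :
    RegularOriented E' := by
  obtain ⟨hreg, lt, hsto, hL, hR⟩ := hro
  rw [sideOrdered_iff_pairwise] at hL hR
  have hirr : ∀ a, ¬ lt a a := fun a => hsto.irrefl a
  cases h with
  | eraseL x w₁ w₂ =>
    rw [vars_cons_inr] at hL
    constructor
    · intro z
      have h1 := (hreg z).1
      have h2 := (hreg z).2
      rw [← count_vars, vars_cons_inr] at h1
      rw [← count_vars] at h2
      constructor <;> rw [← count_vars, vars_substVar, vars_nil]
      · exact le_trans ((substV_nil_sublist x _).count_le _)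
          (le_trans (List.count_le_count_cons) h1)
      · exact le_trans ((substV_nil_sublist x _).count_le _) h2
    · refine ⟨lt, hsto, ?_, ?_⟩ <;>
        rw [sideOrdered_iff_pairwise, vars_substVar, vars_nil]
      · exact hL.of_cons.sublist (substV_nil_sublist x _)
      · exact hR.sublist (substV_nil_sublist x _)
  | eraseR w₁ x w₂ =>
    rw [vars_cons_inr] at hR
    constructor
    · intro z
      have h1 := (hreg z).1
      have h2 := (hreg z).2
      rw [← count_vars] at h1
      rw [← count_vars, vars_cons_inr] at h2
      constructor <;> rw [← count_vars, vars_substVar, vars_nil]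
      · exact le_trans ((substV_nil_sublist x _).count_le _) h1
      · exact le_trans ((substV_nil_sublist x _).count_le _)
          (le_trans (List.count_le_count_cons) h2)
    · refine ⟨lt, hsto, ?_, ?_⟩ <;>
        rw [sideOrdered_iff_pairwise, vars_substVar, vars_nil]
      · exact hL.sublist (substV_nil_sublist x _)
      · exact hR.of_cons.sublist (substV_nil_sublist x _)
  | p1 α w₁ w₂ =>
    have hsub : ∀ w : Word A V, List.Sublist (vars w) (vars (α :: w)) := fun w => by
      cases α with
      | inl a => rw [vars_cons_inl]
      | inr b => rw [vars_cons_inr]; exact List.sublist_cons_self _ _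
    constructor
    · intro z
      have h1 := (hreg z).1
      have h2 := (hreg z).2
      rw [← count_vars] at h1
      rw [← count_vars] at h2
      constructor <;> rw [← count_vars]
      · exact le_trans (((hsub w₁)).count_le _) h1
      · exact le_trans (((hsub w₂)).count_le _) h2
    · exact ⟨lt, hsto, sideOrdered_iff_pairwise.mpr (hL.sublist (hsub w₁)),
        sideOrdered_iff_pairwise.mpr (hR.sublist (hsub w₂))⟩
  | p2 a y w₁ w₂ =>
    have hy2 : y ∉ vars w₂ := not_mem_vars_of_count (hreg y).2
    have hv1 : vars (substVar y [Sum.inl a, Sum.inr y] w₁) = vars w₁ := by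
      rw [vars_substVar]
      simpa using substV_self y (vars w₁)
    have hv2 : vars (substVar y [Sum.inl a, Sum.inr y] w₂) = vars w₂ := by
      rw [vars_substVar]
      simpa using substV_self y (vars w₂)
    rw [vars_cons_inl] at hL
    rw [vars_cons_inr] at hR
    constructor
    · intro z
      have h1 := (hreg z).1
      have h2 := (hreg z).2
      rw [← count_vars, vars_cons_inl] at h1
      rw [← count_vars] at h2
      constructor <;> rw [← count_vars]
      · rw [hv1]; exact h1
      · rw [vars_cons_inr, hv2]
        rw [vars_cons_inr] at h2
        exact h2
    · refine ⟨lt, hsto, ?_, ?_⟩ <;> rw [sideOrdered_iff_pairwise]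
      · rw [hv1]; exact hL
      · rw [vars_cons_inr, hv2]; exact hR
  | p3 x a w₁ w₂ =>
    have hx1 : x ∉ vars w₁ := not_mem_vars_of_count (hreg x).1
    have hv1 : vars (substVar x [Sum.inl a, Sum.inr x] w₁) = vars w₁ := by
      rw [vars_substVar]
      simpa using substV_self x (vars w₁)
    have hv2 : vars (substVar x [Sum.inl a, Sum.inr x] w₂) = vars w₂ := by
      rw [vars_substVar]
      simpa using substV_self x (vars w₂)
    rw [vars_cons_inr] at hL
    rw [vars_cons_inl] at hR
    constructor
    · intro z
      have h1 := (hreg z).1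
      have h2 := (hreg z).2
      rw [← count_vars] at h1
      rw [← count_vars, vars_cons_inl] at h2
      constructor <;> rw [← count_vars]
      · rw [vars_cons_inr, hv1]
        rw [vars_cons_inr] at h1
        exact h1
      · rw [hv2]; exact h2
    · refine ⟨lt, hsto, ?_, ?_⟩ <;> rw [sideOrdered_iff_pairwise]
      · rw [vars_cons_inr, hv1]; exact hL
      · rw [hv2]; exact hR
  | p4L x y hxy w₁ w₂ =>
    rw [vars_cons_inr] at hL hR
    have hx1 : x ∉ vars w₁ := not_mem_vars_of_count (hreg x).1
    have hy2 : y ∉ vars w₂ := not_mem_vars_of_count (hreg y).2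
    have hv1 : vars (substVar y [Sum.inr x, Sum.inr y] w₁)
        = substV y [x, y] (vars w₁) := by
      rw [vars_substVar]; rfl
    have hv2 : vars (substVar y [Sum.inr x, Sum.inr y] w₂) = vars w₂ := by
      rw [vars_substVar]
      exact substV_of_not_mem _ hy2
    constructor
    · intro z
      have h1 := (hreg z).1
      have h2 := (hreg z).2
      rw [← count_vars, vars_cons_inr] at h1 h2
      constructor <;> rw [← count_vars]
      · rw [hv1]
        by_cases hz : z = x
        · rw [hz, count_substV_pair_self hxy]
          have hc0 : (vars w₁).count x = 0 := List.count_eq_zero_of_not_mem hx1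
          have hy1 := (hreg y).1
          rw [← count_vars, vars_cons_inr] at hy1
          have hyy := le_trans (List.count_le_count_cons (a := y) (b := x) (l := vars w₁)) hy1
          omega
        · rw [count_substV_pair y hz]
          exact le_trans (List.count_le_count_cons) h1
      · rw [vars_cons_inr, hv2]
        exact h2
    · by_cases hy1 : y ∈ vars w₁
      · have hx2 : x ∉ vars w₂ := fun hm =>
          hirr x (hsto.trans x y x (List.rel_of_pairwise_cons hL hy1)
            (List.rel_of_pairwise_cons hR hm))
        refine ⟨moveLT lt x y, moveLT_sto hsto hxy, ?_, ?_⟩ <;>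
          rw [sideOrdered_iff_pairwise]
        · rw [hv1]
          exact pairwise_substV_move hirr hxy hL.of_cons hx1
        · rw [vars_cons_inr, hv2]
          refine pairwise_moveLT_of_not_mem ?_ hR
          simp [hx2, hxy]
      · refine ⟨lt, hsto, ?_, ?_⟩ <;> rw [sideOrdered_iff_pairwise]
        · rw [hv1, substV_of_not_mem _ hy1]
          exact hL.of_cons
        · rw [vars_cons_inr, hv2]
          exact hR
  | p4R x y hxy w₁ w₂ =>
    rw [vars_cons_inr] at hL hR
    have hx1 : x ∉ vars w₁ := not_mem_vars_of_count (hreg x).1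
    have hy2 : y ∉ vars w₂ := not_mem_vars_of_count (hreg y).2
    have hv1 : vars (substVar x [Sum.inr y, Sum.inr x] w₁) = vars w₁ := by
      rw [vars_substVar]
      exact substV_of_not_mem _ hx1
    have hv2 : vars (substVar x [Sum.inr y, Sum.inr x] w₂)
        = substV x [y, x] (vars w₂) := by
      rw [vars_substVar]; rfl
    constructor
    · intro z
      have h1 := (hreg z).1
      have h2 := (hreg z).2
      rw [← count_vars, vars_cons_inr] at h1 h2
      constructor <;> rw [← count_vars]
      · rw [vars_cons_inr, hv1]
        exact h1
      · rw [hv2]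
        by_cases hz : z = y
        · rw [hz, count_substV_pair_self (Ne.symm hxy)]
          have hc0 : (vars w₂).count y = 0 := List.count_eq_zero_of_not_mem hy2
          have hx2c := (hreg x).2
          rw [← count_vars, vars_cons_inr] at hx2c
          have hxx := le_trans (List.count_le_count_cons (a := x) (b := y) (l := vars w₂)) hx2c
          omega
        · rw [count_substV_pair x hz]
          exact le_trans (List.count_le_count_cons) h2
    · by_cases hx2 : x ∈ vars w₂
      · have hy1 : y ∉ vars w₁ := fun hm =>
          hirr x (hsto.trans x y x (List.rel_of_pairwise_cons hL hm)
            (List.rel_of_pairwise_cons hR hx2))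
        refine ⟨moveLT lt y x, moveLT_sto hsto (Ne.symm hxy), ?_, ?_⟩ <;>
          rw [sideOrdered_iff_pairwise]
        · rw [vars_cons_inr, hv1]
          refine pairwise_moveLT_of_not_mem ?_ hL
          simp [hy1, Ne.symm hxy]
        · rw [hv2]
          exact pairwise_substV_move hirr (Ne.symm hxy) hR.of_cons hy2
      · refine ⟨lt, hsto, ?_, ?_⟩ <;> rw [sideOrdered_iff_pairwise]
        · rw [vars_cons_inr, hv1]
          exact hL
        · rw [hv2, substV_of_not_mem _ hx2]
          exact hR.of_cons

end WordEq
end
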